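/- arXiv:1111.7284 — 4 statements merged into one kernel-verified Lean document; each statement's English description precedes it below -/
import Mathlib

section
/- For all nonnegative integers p, q, r with p + q ≤ r and r ≥ 1, the smallest eigenvalue of the signed adjacency matrix of Q_{p,q,r} satisfies λ_min(Q_{p,q,r}) ≥ −τ, where τ = (1+√5)/2. -/
/-- A Hoffman graph: a finite simple graph whose vertices are labeled slim or fat,
such that fat vertices are pairwise non-adjacent and every fat vertex is adjacent
to at least one slim vertex. -/
structure HoffmanGraph (V : Type*) where
  adj : V → V → Prop
  symm : ∀ {x y : V}, adj x y → adj y x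
  loopless : ∀ x : V, ¬ adj x x
  fat : V → Prop
  fat_slim : ∀ x : V, fat x → ∃ y : V, adj x y ∧ ¬ fat y
  fat_nonadj : ∀ x y : V, fat x → fat y → ¬ adj x y

/-- The smallest eigenvalue of a real matrix (the infimum of its set of real
eigenvalues); for a real symmetric matrix on a nonempty finite index type this is
the least eigenvalue. -/
noncomputable def minEig {n : Type*} [Fintype n] (M : Matrix n n ℝ) : ℝ :=
  sInf {t : ℝ | ∃ v : n → ℝ, v ≠ 0 ∧ M.mulVec v = t • v}

namespace HoffmanGraph

variable {V : Type*}

/-- The type of slim vertices. -/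
abbrev Slim (H : HoffmanGraph V) : Type _ := {x : V // ¬ H.fat x}

/-- The type of fat vertices. -/
abbrev FatV (H : HoffmanGraph V) : Type _ := {x : V // H.fat x}

noncomputable instance (priority := 50) instFintypeSlim [Finite V] {H : HoffmanGraph V} :
    Fintype H.Slim := Fintype.ofFinite _

noncomputable instance (priority := 50) instFintypeFatV [Finite V] {H : HoffmanGraph V} :
    Fintype H.FatV := Fintype.ofFinite _

/-- The set of fat neighbors `N^f(x)` of a vertex. -/
def fatNbrs (H : HoffmanGraph V) (x : V) : Set V := {f | H.fat f ∧ H.adj x f}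

/-- The set of common fat neighbors `N^f(x) ∩ N^f(y)` of two vertices. -/
def commonFat (H : HoffmanGraph V) (x y : V) : Set V :=
  {f | H.fat f ∧ H.adj x f ∧ H.adj y f}

lemma commonFat_comm (H : HoffmanGraph V) (x y : V) :
    H.commonFat x y = H.commonFat y x := by
  ext f; simp only [commonFat, Set.mem_setOf_eq]; tauto

/-- The degree of a vertex. -/
noncomputable def degree (H : HoffmanGraph V) (x : V) : ℕ := {y | H.adj x y}.ncard

/-- The matrix `B(𝔥) = A_s - C Cᵀ`, written entrywise:
`B x y = A_s x y - |N^f(x) ∩ N^f(y)|`. -/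
noncomputable def B (H : HoffmanGraph V) : Matrix H.Slim H.Slim ℝ := by
  classical
  exact Matrix.of fun x y =>
    (if H.adj x.1 y.1 then (1 : ℝ) else 0) - ((H.commonFat x.1 y.1).ncard : ℝ)

/-- `λ_min(𝔥)`: the smallest eigenvalue of `B(𝔥)`. -/
noncomputable def lamMin [Finite V] (H : HoffmanGraph V) : ℝ := minEig H.B

/-- The adjacency matrix of the slim subgraph of `𝔥` (equivalently, the `B`-matrix
of the slim subgraph regarded as a slim Hoffman graph). -/
noncomputable def slimAdjMatrix (H : HoffmanGraph V) : Matrix H.Slim H.Slim ℝ := by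
  classical
  exact Matrix.of fun x y => if H.adj x.1 y.1 then (1 : ℝ) else 0

/-- A Hoffman graph is fat if every slim vertex has a fat neighbor. -/
def IsFat (H : HoffmanGraph V) : Prop :=
  ∀ x : V, ¬ H.fat x → ∃ f : V, H.fat f ∧ H.adj x f

end HoffmanGraph

/-- An embedding exhibiting `G` as an induced Hoffman subgraph of `H`:
an injection preserving adjacency, non-adjacency, and the slim/fat labeling. -/
structure HoffmanEmbedding {V W : Type*} (G : HoffmanGraph V) (H : HoffmanGraph W) where
  toFun : V → W
  inj : Function.Injective toFun
  adj_iff : ∀ x y : V, G.adj x y ↔ H.adj (toFun x) (toFun y)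
  fat_iff : ∀ x : V, G.fat x ↔ H.fat (toFun x)

/-- An isomorphism of Hoffman graphs. -/
structure HoffmanIso {V W : Type*} (G : HoffmanGraph V) (H : HoffmanGraph W) where
  toEquiv : V ≃ W
  adj_iff : ∀ x y : V, G.adj x y ↔ H.adj (toEquiv x) (toEquiv y)
  fat_iff : ∀ x : V, G.fat x ↔ H.fat (toEquiv x)

namespace HoffmanGraph

variable {V : Type*}

/-- The induced Hoffman subgraph on a set `W` of vertices, provided every fat
vertex of `W` keeps a slim neighbor inside `W`. -/
def induce (H : HoffmanGraph V) (W : Finset V)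
    (hW : ∀ y ∈ W, H.fat y → ∃ x ∈ W, ¬ H.fat x ∧ H.adj y x) :
    HoffmanGraph {v : V // v ∈ W} where
  adj x y := H.adj x.1 y.1
  symm := @fun x y h => H.symm h
  loopless x h := H.loopless x.1 h
  fat x := H.fat x.1
  fat_slim x hx := by
    obtain ⟨z, hzW, hz1, hz2⟩ := hW x.1 x.2 hx
    exact ⟨⟨z, hzW⟩, hz2, hz1⟩
  fat_nonadj x y hx hy := H.fat_nonadj x.1 y.1 hx hy

/-- A decomposition of a Hoffman graph `H` into the family of induced Hoffman
subgraphs on the (nonempty) vertex sets `W i`. -/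
structure IsDecomposition (H : HoffmanGraph V) {ι : Type*} (W : ι → Finset V) : Prop where
  nonempty : ∀ i, (W i).Nonempty
  cover : ∀ v : V, ∃ i, v ∈ W i
  slim_disj : ∀ i j, i ≠ j → ∀ x : V, ¬ H.fat x → x ∈ W i → x ∈ W j → False
  fat_closed : ∀ i, ∀ x y : V, x ∈ W i → ¬ H.fat x → H.fat y → H.adj x y → y ∈ W i
  part_fat : ∀ i, ∀ y ∈ W i, H.fat y → ∃ x ∈ W i, ¬ H.fat x ∧ H.adj y x
  cross : ∀ i j, i ≠ j → ∀ x y : V, x ∈ W i → y ∈ W j → ¬ H.fat x → ¬ H.fat y →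
    (H.commonFat x y).ncard ≤ 1 ∧ ((H.commonFat x y).ncard = 1 ↔ H.adj x y)

/-- A Hoffman graph is decomposable if it admits a decomposition into `n ≥ 2` parts. -/
def Decomposable (H : HoffmanGraph V) : Prop :=
  ∃ n : ℕ, 2 ≤ n ∧ ∃ W : Fin n → Finset V, H.IsDecomposition W

/-- `α`-reducibility: `λ_min(H) ≥ α` and there is a Hoffman graph `H'` containing `H`
as an induced Hoffman subgraph together with a decomposition `{𝔥¹, 𝔥²}` of `H'` whose
parts have smallest eigenvalue at least `α` and whose slim vertex sets both meet the
slim vertex set of `H`. -/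
def AlphaReducible [Finite V] (H : HoffmanGraph V) (α : ℝ) : Prop :=
  H.lamMin ≥ α ∧
  ∃ (V' : Type) (_ : Finite V') (H' : HoffmanGraph V') (e : HoffmanEmbedding H H')
    (W : Fin 2 → Finset V') (hD : H'.IsDecomposition W),
    (∀ i, (H'.induce (W i) (hD.part_fat i)).lamMin ≥ α) ∧
    (∀ i, ∃ v : V, ¬ H.fat v ∧ e.toFun v ∈ W i)

/-- `α`-irreducibility: `λ_min(H) ≥ α` and `H` is not `α`-reducible. -/
def AlphaIrreducible [Finite V] (H : HoffmanGraph V) (α : ℝ) : Prop :=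
  H.lamMin ≥ α ∧ ¬ H.AlphaReducible α

end HoffmanGraph

/-- An edge-signed graph: a simple graph whose edge set is partitioned into
`(+)`-edges and `(−)`-edges. -/
structure EdgeSignedGraph (V : Type*) where
  pos : V → V → Prop
  neg : V → V → Prop
  pos_symm : ∀ {x y : V}, pos x y → pos y x
  neg_symm : ∀ {x y : V}, neg x y → neg y x
  pos_irrefl : ∀ x : V, ¬ pos x x
  neg_irrefl : ∀ x : V, ¬ neg x x
  pos_neg : ∀ x y : V, pos x y → neg x y → False

namespace EdgeSignedGraph

variable {V : Type*}

/-- The signed adjacency matrix: `1` on `(+)`-edges, `−1` on `(−)`-edges, `0` otherwise. -/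
noncomputable def M (S : EdgeSignedGraph V) : Matrix V V ℝ := by
  classical
  exact Matrix.of fun x y => if S.pos x y then (1 : ℝ) else if S.neg x y then -1 else 0

/-- The underlying simple graph of an edge-signed graph. -/
def toSimpleGraph (S : EdgeSignedGraph V) : SimpleGraph V where
  Adj x y := S.pos x y ∨ S.neg x y
  symm := ⟨fun x y h => h.elim (fun h => Or.inl (S.pos_symm h)) (fun h => Or.inr (S.neg_symm h))⟩
  loopless := ⟨fun x h => h.elim (S.pos_irrefl x) (S.neg_irrefl x)⟩

/-- `S.HasInduced T`: the edge-signed graph `S` contains an induced edge-signed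
subgraph isomorphic to `T`. -/
def HasInduced {W : Type*} (S : EdgeSignedGraph V) (T : EdgeSignedGraph W) : Prop :=
  ∃ f : W → V, Function.Injective f ∧
    (∀ x y : W, T.pos x y ↔ S.pos (f x) (f y)) ∧
    (∀ x y : W, T.neg x y ↔ S.neg (f x) (f y))

end EdgeSignedGraph

/-- An isomorphism of edge-signed graphs. -/
structure EdgeSignedIso {V W : Type*} (S : EdgeSignedGraph V) (T : EdgeSignedGraph W) where
  toEquiv : V ≃ W
  pos_iff : ∀ x y : V, S.pos x y ↔ T.pos (toEquiv x) (toEquiv y)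
  neg_iff : ∀ x y : V, S.neg x y ↔ T.neg (toEquiv x) (toEquiv y)

/-- The special graph `S(𝔥)` of a Hoffman graph: the edge-signed graph on the slim
vertices where adjacent vertices with no common fat neighbor form a `(+)`-edge, and
non-adjacent vertices with a common fat neighbor form a `(−)`-edge. -/
def HoffmanGraph.special {V : Type*} (H : HoffmanGraph V) : EdgeSignedGraph H.Slim where
  pos x y := H.adj x.1 y.1 ∧ H.commonFat x.1 y.1 = ∅
  neg x y := x ≠ y ∧ ¬ H.adj x.1 y.1 ∧ (H.commonFat x.1 y.1).Nonempty
  pos_symm := @fun x y h => ⟨H.symm h.1, by rw [H.commonFat_comm]; exact h.2⟩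
  neg_symm := @fun x y h =>
    ⟨h.1.symm, fun ha => h.2.1 (H.symm ha), by rw [H.commonFat_comm]; exact h.2.2⟩
  pos_irrefl x h := H.loopless x.1 h.1
  neg_irrefl x h := h.1 rfl
  pos_neg x y hp hn := hn.2.1 hp.1

/-- The edge-signed graph `Q_{p,q,r}`: a `(+)`-clique `V_r = Fin r`, a set
`V_p = Fin p` matched by `(+)`-edges to the first `p` vertices of `V_r`, and a set
`V_q = Fin q` matched by `(−)`-edges to the next `q` vertices of `V_r`. -/
def Q (p q r : ℕ) : EdgeSignedGraph (Fin p ⊕ Fin q ⊕ Fin r) where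
  pos x y :=
    (∃ (i : Fin p) (k : Fin r), x = Sum.inl i ∧ y = Sum.inr (Sum.inr k) ∧ (k : ℕ) = (i : ℕ)) ∨
    (∃ (i : Fin p) (k : Fin r), y = Sum.inl i ∧ x = Sum.inr (Sum.inr k) ∧ (k : ℕ) = (i : ℕ)) ∨
    (∃ (k l : Fin r), x = Sum.inr (Sum.inr k) ∧ y = Sum.inr (Sum.inr l) ∧ k ≠ l)
  neg x y :=
    (∃ (j : Fin q) (k : Fin r),
      x = Sum.inr (Sum.inl j) ∧ y = Sum.inr (Sum.inr k) ∧ (k : ℕ) = p + (j : ℕ)) ∨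
    (∃ (j : Fin q) (k : Fin r),
      y = Sum.inr (Sum.inl j) ∧ x = Sum.inr (Sum.inr k) ∧ (k : ℕ) = p + (j : ℕ))
  pos_symm := @fun x y h => by
    rcases h with ⟨i, k, h1, h2, h3⟩ | ⟨i, k, h1, h2, h3⟩ | ⟨k, l, h1, h2, h3⟩
    · exact Or.inr (Or.inl ⟨i, k, h1, h2, h3⟩)
    · exact Or.inl ⟨i, k, h1, h2, h3⟩
    · exact Or.inr (Or.inr ⟨l, k, h2, h1, h3.symm⟩)
  neg_symm := @fun x y h => by
    rcases h with ⟨j, k, h1, h2, h3⟩ | ⟨j, k, h1, h2, h3⟩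
    · exact Or.inr ⟨j, k, h1, h2, h3⟩
    · exact Or.inl ⟨j, k, h1, h2, h3⟩
  pos_irrefl x h := by
    rcases h with ⟨i, k, h1, h2, h3⟩ | ⟨i, k, h1, h2, h3⟩ | ⟨k, l, h1, h2, h3⟩ <;>
      subst h1 <;> simp_all
  neg_irrefl x h := by
    rcases h with ⟨j, k, h1, h2, h3⟩ | ⟨j, k, h1, h2, h3⟩ <;> subst h1 <;> simp_all
  pos_neg x y hp hn := by
    rcases hp with ⟨i, k, h1, h2, h3⟩ | ⟨i, k, h1, h2, h3⟩ | ⟨k, l, h1, h2, h3⟩ <;>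
      rcases hn with ⟨j, m, g1, g2, g3⟩ | ⟨j, m, g1, g2, g3⟩ <;> subst h1 <;> simp_all

/-- The edge-signed triangle `T₁` with exactly one `(+)`-edge and two `(−)`-edges. -/
def T1 : EdgeSignedGraph (Fin 3) where
  pos x y := (x = 0 ∧ y = 1) ∨ (x = 1 ∧ y = 0)
  neg x y := x ≠ y ∧ (x = 2 ∨ y = 2)
  pos_symm := @fun x y h => by tauto
  neg_symm := @fun x y h => ⟨h.1.symm, h.2.symm⟩
  pos_irrefl x h := by
    rcases h with ⟨h1, h2⟩ | ⟨h1, h2⟩ <;> subst h1 <;> exact absurd h2 (by decide)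
  neg_irrefl x h := h.1 rfl
  pos_neg x y hp hn := by
    rcases hp with ⟨h1, h2⟩ | ⟨h1, h2⟩ <;> subst h1 <;> subst h2 <;>
      exact absurd hn.2 (by decide)

/-- The golden ratio `τ = (1 + √5)/2`. -/
noncomputable def goldenRatio' : ℝ := (1 + Real.sqrt 5) / 2

open Finset in
lemma quadForm (p q r : ℕ) (hpq : p + q ≤ r) (v : (Fin p ⊕ Fin q ⊕ Fin r) → ℝ) :
    dotProduct v ((Q p q r).M.mulVec v) =
      2 * ∑ i : Fin p, v (Sum.inl i) * v (Sum.inr (Sum.inr ⟨i, lt_of_lt_of_le (lt_of_lt_of_le i.2 (Nat.le_add_right p q)) hpq⟩))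
      - 2 * ∑ j : Fin q, v (Sum.inr (Sum.inl j)) * v (Sum.inr (Sum.inr ⟨p + j, lt_of_lt_of_le (Nat.add_lt_add_left j.2 p) hpq⟩))
      + ((∑ k : Fin r, v (Sum.inr (Sum.inr k)))^2 - ∑ k : Fin r, v (Sum.inr (Sum.inr k))^2) := by
  classical
  set ι : Fin p → Fin r := fun i => ⟨i, lt_of_lt_of_le (lt_of_lt_of_le i.2 (Nat.le_add_right p q)) hpq⟩ with hι
  set κ : Fin q → Fin r := fun j => ⟨p + j, lt_of_lt_of_le (Nat.add_lt_add_left j.2 p) hpq⟩ with hκ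
  have hM1 : ∀ (i i' : Fin p), (Q p q r).M (Sum.inl i) (Sum.inl i') = 0 := by
    intros; simp [EdgeSignedGraph.M, Q]
  have hM2 : ∀ (i : Fin p) (j : Fin q), (Q p q r).M (Sum.inl i) (Sum.inr (Sum.inl j)) = 0 := by
    intros; simp [EdgeSignedGraph.M, Q]
  have hM2' : ∀ (i : Fin p) (j : Fin q), (Q p q r).M (Sum.inr (Sum.inl j)) (Sum.inl i) = 0 := by
    intros; simp [EdgeSignedGraph.M, Q]
  have hM3 : ∀ (i : Fin p) (k : Fin r),
      (Q p q r).M (Sum.inl i) (Sum.inr (Sum.inr k)) = if k = ι i then 1 else 0 := by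
    intros i k; simp [EdgeSignedGraph.M, Q, hι, Fin.ext_iff] <;> simp [Fin.val_inj]
  have hM3' : ∀ (i : Fin p) (k : Fin r),
      (Q p q r).M (Sum.inr (Sum.inr k)) (Sum.inl i) = if k = ι i then 1 else 0 := by
    intros i k; simp [EdgeSignedGraph.M, Q, hι, Fin.ext_iff] <;> simp [Fin.val_inj]
  have hM4 : ∀ (j : Fin q) (k : Fin r),
      (Q p q r).M (Sum.inr (Sum.inl j)) (Sum.inr (Sum.inr k)) = if k = κ j then -1 else 0 := by
    intros j k; simp [EdgeSignedGraph.M, Q, hκ, Fin.ext_iff] <;> simp [Fin.val_inj]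
  have hM4' : ∀ (j : Fin q) (k : Fin r),
      (Q p q r).M (Sum.inr (Sum.inr k)) (Sum.inr (Sum.inl j)) = if k = κ j then -1 else 0 := by
    intros j k; simp [EdgeSignedGraph.M, Q, hκ, Fin.ext_iff] <;> simp [Fin.val_inj]
  have hM5 : ∀ (j j' : Fin q), (Q p q r).M (Sum.inr (Sum.inl j)) (Sum.inr (Sum.inl j')) = 0 := by
    intros; simp [EdgeSignedGraph.M, Q]
  have hM6 : ∀ (k l : Fin r), (Q p q r).M (Sum.inr (Sum.inr k)) (Sum.inr (Sum.inr l))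
      = 1 - if k = l then 1 else 0 := by
    intros k l; by_cases h : k = l <;> simp [EdgeSignedGraph.M, Q, h]
  simp only [dotProduct, Matrix.mulVec, Fintype.sum_sum_type, hM1, hM2, hM2', hM3, hM3',
    hM4, hM4', hM5, hM6, mul_ite, ite_mul, mul_zero, zero_mul, mul_one, one_mul, mul_neg, neg_mul,
    sub_mul, mul_sub, Finset.sum_sub_distrib, Finset.sum_ite_eq', Finset.mem_univ, if_true,
    Finset.sum_const_zero, zero_add, add_zero, neg_zero, sub_zero]
  rw [sq, Finset.sum_mul_sum]
  have hdiag : ∀ x : Fin r, (∑ l : Fin r, if x = l then v (Sum.inr (Sum.inr l)) else 0)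
      = v (Sum.inr (Sum.inr x)) := by intro x; simp
  simp_rw [hdiag, mul_add, mul_sub, Finset.mul_sum, mul_ite, mul_zero, mul_neg,
    Finset.sum_add_distrib, Finset.sum_sub_distrib]
  have T1 : ∑ x : Fin r, ∑ i : Fin p,
      (if x = ι i then v (Sum.inr (Sum.inr x)) * v (Sum.inl i) else 0)
      = ∑ i : Fin p, v (Sum.inr (Sum.inr (ι i))) * v (Sum.inl i) := by
    rw [Finset.sum_comm]; simp
  have T2 : ∑ x : Fin r, ∑ j : Fin q,
      (if x = κ j then -(v (Sum.inr (Sum.inr x)) * v (Sum.inr (Sum.inl j))) else 0)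
      = ∑ j : Fin q, -(v (Sum.inr (Sum.inr (κ j))) * v (Sum.inr (Sum.inl j))) := by
    rw [Finset.sum_comm]; simp
  rw [T1, T2]
  have c1 : ∑ i : Fin p, v (Sum.inr (Sum.inr (ι i))) * v (Sum.inl i)
      = ∑ i : Fin p, v (Sum.inl i) * v (Sum.inr (Sum.inr (ι i))) := by
    exact Finset.sum_congr rfl (fun i _ => by ring)
  have c2 : ∑ j : Fin q, -(v (Sum.inr (Sum.inr (κ j))) * v (Sum.inr (Sum.inl j)))
      = ∑ j : Fin q, -(v (Sum.inr (Sum.inl j)) * v (Sum.inr (Sum.inr (κ j)))) := by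
    exact Finset.sum_congr rfl (fun j _ => by ring)
  have c3 : ∑ x : Fin r, v (Sum.inr (Sum.inr x)) * v (Sum.inr (Sum.inr x))
      = ∑ x : Fin r, v (Sum.inr (Sum.inr x)) ^ 2 := by
    exact Finset.sum_congr rfl (fun x _ => (sq _).symm)
  rw [c1, c2, c3]
  simp only [hι, hκ, Finset.sum_neg_distrib, Finset.mul_sum]
  ring_nf
  simp only [← Finset.mul_sum]
  simp only [← Finset.sum_mul, ← Finset.mul_sum]
  ring
/-- For nonnegative integers `p, q, r` with `p + q ≤ r` and `r ≥ 1`,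
the smallest eigenvalue of the signed adjacency matrix of `Q_{p,q,r}` is at least
`−τ`, where `τ = (1+√5)/2`. -/
theorem statement9 (p q r : ℕ) (hpq : p + q ≤ r) (hr : 1 ≤ r) :
    minEig (Q p q r).M ≥ -((1 + Real.sqrt 5) / 2) := by
  classical
  have h5 : Real.sqrt 5 ^ 2 = 5 := Real.sq_sqrt (by norm_num)
  have h5n : (0:ℝ) ≤ Real.sqrt 5 := Real.sqrt_nonneg 5
  set τ : ℝ := (1 + Real.sqrt 5)/2 with hτ
  have hτ1 : 1 < τ := by rw [hτ]; nlinarith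
  have hτsq : τ^2 = τ + 1 := by rw [hτ]; nlinarith
  set ι : Fin p → Fin r := fun i => ⟨i, lt_of_lt_of_le (lt_of_lt_of_le i.2 (Nat.le_add_right p q)) hpq⟩ with hι
  set κ : Fin q → Fin r := fun j => ⟨p + j, lt_of_lt_of_le (Nat.add_lt_add_left j.2 p) hpq⟩ with hκ
  have key : ∀ v : (Fin p ⊕ Fin q ⊕ Fin r) → ℝ,
      -(τ * dotProduct v v) ≤ dotProduct v ((Q p q r).M.mulVec v) := by
    intro v
    set x : Fin p → ℝ := fun i => v (Sum.inl i) with hx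
    set y : Fin q → ℝ := fun j => v (Sum.inr (Sum.inl j)) with hy
    set z : Fin r → ℝ := fun k => v (Sum.inr (Sum.inr k)) with hz
    have hvv : dotProduct v v
        = ∑ i, x i ^ 2 + ∑ j, y j ^ 2 + ∑ k, z k ^ 2 := by
      simp [dotProduct, Fintype.sum_sum_type, sq, hx, hy, hz, add_assoc]
    rw [quadForm p q r hpq v, hvv]
    -- subset sum bound
    have hsub : ∑ i, z (ι i) ^ 2 + ∑ j, z (κ j) ^ 2 ≤ ∑ k, z k ^ 2 := by
      set f : Fin p ⊕ Fin q → Fin r := Sum.elim ι κ with hf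
      have hfinj : Function.Injective f := by
        rintro (a|a) (b|b) h <;>
          simp only [hf, Sum.elim_inl, Sum.elim_inr, hι, hκ, Fin.mk.injEq] at h <;>
          first
            | (ext; omega)
            | (exact absurd h (by omega))
            | (simp only [Sum.inl.injEq, Sum.inr.injEq]; ext; omega)
      have h1 : ∑ s : Fin p ⊕ Fin q, z (f s) ^ 2 = ∑ k ∈ Finset.univ.image f, z k ^ 2 := by
        rw [Finset.sum_image (fun a _ b _ h => hfinj h)]
      have h2 : ∑ k ∈ Finset.univ.image f, z k ^ 2 ≤ ∑ k, z k ^ 2 :=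
        Finset.sum_le_sum_of_subset_of_nonneg (Finset.subset_univ _)
          (fun _ _ _ => sq_nonneg _)
      calc ∑ i, z (ι i) ^ 2 + ∑ j, z (κ j) ^ 2
          = ∑ s : Fin p ⊕ Fin q, z (f s) ^ 2 := by
            rw [Fintype.sum_sum_type]; simp [hf]
        _ ≤ ∑ k, z k ^ 2 := h1 ▸ h2
    have hE1 : 0 ≤ τ * ∑ i, x i ^ 2 + 2 * ∑ i, x i * z (ι i) + (τ - 1) * ∑ i, z (ι i) ^ 2 := by
      have e : τ * ∑ i, x i ^ 2 + 2 * ∑ i, x i * z (ι i) + (τ - 1) * ∑ i, z (ι i) ^ 2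
          = ∑ i, (τ * x i ^ 2 + 2 * (x i * z (ι i)) + (τ - 1) * z (ι i) ^ 2) := by
        rw [Finset.sum_add_distrib, Finset.sum_add_distrib, Finset.mul_sum, Finset.mul_sum,
          Finset.mul_sum]
      rw [e]
      refine Finset.sum_nonneg fun i _ => ?_
      nlinarith [sq_nonneg (τ * x i + z (ι i)), sq_nonneg (x i), sq_nonneg (z (ι i))]
    have hE2 : 0 ≤ τ * ∑ j, y j ^ 2 - 2 * ∑ j, y j * z (κ j) + (τ - 1) * ∑ j, z (κ j) ^ 2 := by
      have e : τ * ∑ j, y j ^ 2 - 2 * ∑ j, y j * z (κ j) + (τ - 1) * ∑ j, z (κ j) ^ 2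
          = ∑ j, (τ * y j ^ 2 - 2 * (y j * z (κ j)) + (τ - 1) * z (κ j) ^ 2) := by
        rw [Finset.sum_add_distrib, Finset.sum_sub_distrib, Finset.mul_sum, Finset.mul_sum,
          Finset.mul_sum]
      rw [e]
      refine Finset.sum_nonneg fun j _ => ?_
      nlinarith [sq_nonneg (τ * y j - z (κ j)), sq_nonneg (y j), sq_nonneg (z (κ j))]
    have hF : 0 ≤ (τ - 1) * (∑ k, z k ^ 2 - ∑ i, z (ι i) ^ 2 - ∑ j, z (κ j) ^ 2) :=
      mul_nonneg (by linarith) (by linarith)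
    have hS : 0 ≤ (∑ k, z k) ^ 2 := sq_nonneg _
    nlinarith [hE1, hE2, hF, hS]
  have hpos : ∀ v : (Fin p ⊕ Fin q ⊕ Fin r) → ℝ, v ≠ 0 → 0 < dotProduct v v := by
    intro v hv
    have h0 : 0 ≤ dotProduct v v := Finset.sum_nonneg fun a _ => mul_self_nonneg _
    rcases h0.lt_or_eq with h | h
    · exact h
    · exact absurd ((dotProduct_self_eq_zero).mp h.symm) hv
  unfold minEig
  rcases Set.eq_empty_or_nonempty
      {t : ℝ | ∃ v : (Fin p ⊕ Fin q ⊕ Fin r) → ℝ, v ≠ 0 ∧ (Q p q r).M.mulVec v = t • v}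
      with he | hne
  · rw [he, Real.sInf_empty]; simp only [ge_iff_le, neg_le]; nlinarith
  · refine le_csInf hne ?_
    rintro t ⟨v, hv0, hEig⟩
    have h1 : dotProduct v ((Q p q r).M.mulVec v) = t * dotProduct v v := by
      rw [hEig, dotProduct_smul, smul_eq_mul]
    have h2 := hpos v hv0
    have h3 := key v
    rw [h1] at h3
    nlinarith
end

section
/- Let 𝔥 be a fat indecomposable Hoffman graph with smallest eigenvalue λ_min(𝔥) ≥ −1−τ. If some slim vertex of 𝔥 has at least two fat neighbors, then 𝔥 has at most two slim vertices; that is, the special graph S(𝔥) is isomorphic to Q_{0,0,1} (a single vertex), Q_{1,0,1} (two vertices joined by a (+)-edge), or Q_{0,1,1} (two vertices joined by a (−)-edge). -/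
set_option linter.unusedSectionVars false
set_option linter.unusedVariables false
set_option maxHeartbeats 1000000

namespace Aux13


open Matrix

lemma bddBelow_eigSet {n : Type*} [Fintype n] (M : Matrix n n ℝ) :
    BddBelow {t : ℝ | ∃ v : n → ℝ, v ≠ 0 ∧ M.mulVec v = t • v} := by
  classical
  set C : ℝ := ∑ i : n, ∑ j : n, |M i j| with hC
  refine ⟨-C, fun t ht => ?_⟩
  obtain ⟨v, hv0, hveq⟩ := ht
  have hvne : ∃ j, v j ≠ 0 := by
    by_contra hc
    push_neg at hc
    exact hv0 (funext fun j => hc j)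
  obtain ⟨j0, hj0⟩ := hvne
  have hne : (Finset.univ : Finset n).Nonempty := ⟨j0, Finset.mem_univ _⟩
  obtain ⟨i, -, hi⟩ := Finset.exists_max_image Finset.univ (fun k => |v k|) hne
  have hvi : 0 < |v i| := lt_of_lt_of_le (abs_pos.mpr hj0) (hi j0 (Finset.mem_univ _))
  have h1 : |t| * |v i| = |(M.mulVec v) i| := by
    rw [hveq]
    simp [abs_mul]
  have h2 : |(M.mulVec v) i| ≤ C * |v i| := by
    have hstep : |(M.mulVec v) i| ≤ ∑ j : n, |M i j| * |v i| := by
      refine le_trans (Finset.abs_sum_le_sum_abs _ _) ?_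
      refine Finset.sum_le_sum fun j _ => ?_
      rw [abs_mul]
      exact mul_le_mul_of_nonneg_left (hi j (Finset.mem_univ _)) (abs_nonneg _)
    refine le_trans hstep ?_
    rw [← Finset.sum_mul]
    refine mul_le_mul_of_nonneg_right ?_ (abs_nonneg _)
    exact Finset.single_le_sum (f := fun i' => ∑ k, |M i' k|)
      (fun i' _ => Finset.sum_nonneg fun k _ => abs_nonneg _) (Finset.mem_univ i)
  have habs : |t| ≤ C := by
    have := h1.trans_le h2
    exact le_of_mul_le_mul_right this hvi
  linarith [neg_abs_le t]

lemma psd_shift {n : Type*} [Fintype n] [DecidableEq n] (M : Matrix n n ℝ)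
    (hM : M.IsHermitian) {c : ℝ} (hc : c ≤ minEig M) :
    (M - c • (1 : Matrix n n ℝ)).PosSemidef := by
  have hone : (c • (1 : Matrix n n ℝ)).IsHermitian := by
    unfold Matrix.IsHermitian
    rw [Matrix.conjTranspose_smul, Matrix.conjTranspose_one]
    simp
  have hM' : (M - c • (1 : Matrix n n ℝ)).IsHermitian := hM.sub hone
  refine hM'.posSemidef_iff_eigenvalues_nonneg.mpr (Pi.le_def.mpr fun i => ?_)
  rw [Pi.zero_apply]
  set μ := hM'.eigenvalues i with hμ
  have hvec := hM'.mulVec_eigenvectorBasis i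
  have hvne : (⇑(hM'.eigenvectorBasis i) : n → ℝ) ≠ 0 := by
    have := hM'.eigenvectorBasis.orthonormal.ne_zero i
    intro hcon
    apply this
    ext j
    exact congrFun hcon j
  have hmem : μ + c ∈ {t : ℝ | ∃ v : n → ℝ, v ≠ 0 ∧ M.mulVec v = t • v} := by
    refine ⟨⇑(hM'.eigenvectorBasis i), hvne, ?_⟩
    have hsub : (M - c • (1 : Matrix n n ℝ)).mulVec (⇑(hM'.eigenvectorBasis i))
        = M.mulVec (⇑(hM'.eigenvectorBasis i)) - c • (⇑(hM'.eigenvectorBasis i)) := by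
      rw [Matrix.sub_mulVec, Matrix.smul_mulVec, Matrix.one_mulVec]
    rw [hsub] at hvec
    have : M.mulVec (⇑(hM'.eigenvectorBasis i)) = μ • (⇑(hM'.eigenvectorBasis i)) + c • (⇑(hM'.eigenvectorBasis i)) := by
      rw [← hvec]; abel
    rw [this, ← add_smul, add_comm μ c, add_comm c μ]
  have hle : minEig M ≤ μ + c := csInf_le (bddBelow_eigSet M) hmem
  linarith

lemma quad_lower {n : Type*} [Fintype n] [DecidableEq n] (M : Matrix n n ℝ)
    (hM : M.IsHermitian) {c : ℝ} (hc : c ≤ minEig M) (v : n → ℝ) :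
    c * (v ⬝ᵥ v) ≤ v ⬝ᵥ M.mulVec v := by
  have h := (psd_shift M hM hc).dotProduct_mulVec_nonneg v
  have hstar : star v = v := by ext j; simp
  rw [hstar] at h
  have hsub : (M - c • (1 : Matrix n n ℝ)).mulVec v = M.mulVec v - c • v := by
    rw [Matrix.sub_mulVec, Matrix.smul_mulVec, Matrix.one_mulVec]
  rw [hsub, dotProduct_sub, dotProduct_smul] at h
  simp only [smul_eq_mul] at h
  linarith

lemma quad_eq_eigen {n : Type*} [Fintype n] [DecidableEq n] (M : Matrix n n ℝ)
    (hM : M.IsHermitian) {c : ℝ} (hc : c ≤ minEig M) (v : n → ℝ)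
    (heq : v ⬝ᵥ M.mulVec v = c * (v ⬝ᵥ v)) :
    M.mulVec v = c • v := by
  have hpsd := psd_shift M hM hc
  have hstar : star v = v := by ext j; simp
  have hzero : star v ⬝ᵥ (M - c • (1 : Matrix n n ℝ)).mulVec v = 0 := by
    rw [hstar]
    have hsub : (M - c • (1 : Matrix n n ℝ)).mulVec v = M.mulVec v - c • v := by
      rw [Matrix.sub_mulVec, Matrix.smul_mulVec, Matrix.one_mulVec]
    rw [hsub, dotProduct_sub, dotProduct_smul, heq]
    simp
  have := (hpsd.dotProduct_mulVec_zero_iff v).mp hzero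
  have hsub : (M - c • (1 : Matrix n n ℝ)).mulVec v = M.mulVec v - c • v := by
    rw [Matrix.sub_mulVec, Matrix.smul_mulVec, Matrix.one_mulVec]
  rw [hsub, sub_eq_zero] at this
  exact this



open Matrix

variable {n : Type*} [Fintype n] [DecidableEq n]

/-- vector supported on two points -/
def vv (x y : n) (p q : ℝ) : n → ℝ := fun i => if i = x then p else if i = y then q else 0

lemma vv_x {x y : n} (hxy : x ≠ y) (p q : ℝ) : vv x y p q x = p := by simp [vv]

lemma vv_y {x y : n} (hxy : x ≠ y) (p q : ℝ) : vv x y p q y = q := by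
  simp [vv, hxy.symm]

lemma vv_other {x y z : n} (hzx : z ≠ x) (hzy : z ≠ y) (p q : ℝ) : vv x y p q z = 0 := by
  simp [vv, hzx, hzy]

lemma sum_vv (x y : n) (hxy : x ≠ y) (p q : ℝ) (f : n → ℝ) :
    ∑ i, f i * vv x y p q i = f x * p + f y * q := by
  classical
  rw [← Finset.sum_subset (Finset.subset_univ ({x, y} : Finset n))]
  · rw [Finset.sum_pair hxy, vv_x hxy, vv_y hxy]
  · intro z _ hz
    simp only [Finset.mem_insert, Finset.mem_singleton] at hz
    push_neg at hz
    rw [vv_other hz.1 hz.2, mul_zero]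

lemma dot_vv (x y : n) (hxy : x ≠ y) (p q : ℝ) (M : Matrix n n ℝ) :
    vv x y p q ⬝ᵥ M.mulVec (vv x y p q)
      = p * p * M x x + p * q * (M x y + M y x) + q * q * M y y := by
  have hmv : ∀ i, (M.mulVec (vv x y p q)) i = M i x * p + M i y * q := by
    intro i
    simp only [Matrix.mulVec, dotProduct]
    exact sum_vv x y hxy p q (M i)
  have : vv x y p q ⬝ᵥ M.mulVec (vv x y p q)
      = (M.mulVec (vv x y p q)) x * p + (M.mulVec (vv x y p q)) y * q := by
    simp only [dotProduct]
    rw [← sum_vv x y hxy p q (M.mulVec (vv x y p q))]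
    congr 1
    ext i
    ring
  rw [this, hmv x, hmv y]
  ring

lemma dot_vv_self (x y : n) (hxy : x ≠ y) (p q : ℝ) :
    vv x y p q ⬝ᵥ vv x y p q = p * p + q * q := by
  simp only [dotProduct]
  rw [sum_vv x y hxy p q (vv x y p q), vv_x hxy, vv_y hxy]

lemma vv_ne_zero {x y : n} (hxy : x ≠ y) {p : ℝ} (hp : p ≠ 0) (q : ℝ) :
    vv x y p q ≠ 0 := by
  intro h
  apply hp
  have := congrFun h x
  rwa [vv_x hxy] at this

/-- single point vector -/
def sv (x : n) : n → ℝ := fun i => if i = x then 1 else 0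

lemma sum_sv (x : n) (f : n → ℝ) : ∑ i, f i * sv x i = f x := by
  simp [sv, mul_comm]

lemma dot_sv (x : n) (M : Matrix n n ℝ) : sv x ⬝ᵥ M.mulVec (sv x) = M x x := by
  have hmv : ∀ i, (M.mulVec (sv x)) i = M i x := by
    intro i
    simp only [Matrix.mulVec, dotProduct]
    exact sum_sv x (M i)
  have : sv x ⬝ᵥ M.mulVec (sv x) = (M.mulVec (sv x)) x := by
    simp only [dotProduct]
    rw [← sum_sv x (M.mulVec (sv x))]
    congr 1; ext i; ring
  rw [this, hmv]

lemma dot_sv_self (x : n) : sv x ⬝ᵥ sv x = 1 := by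
  simp only [dotProduct]
  rw [sum_sv x (sv x)]
  simp [sv]

lemma int_mul_sqrt5 {m k : ℤ} (h : (m : ℝ) * Real.sqrt 5 = (k : ℝ)) : m = 0 ∧ k = 0 := by
  have hirr : Irrational (Real.sqrt 5) := by
    have : Irrational (Real.sqrt (5 : ℕ)) := (by norm_num : Nat.Prime 5).irrational_sqrt
    simpa using this
  have hm : m = 0 := by
    by_contra hm
    have : Real.sqrt 5 = (k : ℝ) / (m : ℝ) := by
      field_simp at h ⊢
      linarith [h]
    apply hirr
    rw [this]
    exact ⟨(k : ℚ) / (m : ℚ), by push_cast; ring⟩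
  refine ⟨hm, ?_⟩
  rw [hm] at h
  simp at h
  exact_mod_cast h.symm

lemma sqrt5_lt_3 : Real.sqrt 5 < 3 := by
  nlinarith [Real.sq_sqrt (by norm_num : (5:ℝ) ≥ 0), Real.sqrt_nonneg 5]

lemma sqrt5_gt_2 : 2 < Real.sqrt 5 := by
  nlinarith [Real.sq_sqrt (by norm_num : (5:ℝ) ≥ 0), Real.sqrt_nonneg 5]


section Hoffman

open HoffmanGraph

variable {V : Type*} [Fintype V] (H : HoffmanGraph V)

lemma B_of_adj (u w : H.Slim) (h : H.adj u.1 w.1) :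
    H.B u w = 1 - ((H.commonFat u.1 w.1).ncard : ℝ) := by
  classical
  show (if H.adj u.1 w.1 then (1:ℝ) else 0) - ((H.commonFat u.1 w.1).ncard : ℝ) = _
  rw [if_pos h]

lemma B_of_nadj (u w : H.Slim) (h : ¬ H.adj u.1 w.1) :
    H.B u w = -((H.commonFat u.1 w.1).ncard : ℝ) := by
  classical
  show (if H.adj u.1 w.1 then (1:ℝ) else 0) - ((H.commonFat u.1 w.1).ncard : ℝ) = _
  rw [if_neg h]
  ring

lemma B_symm_entry (u w : H.Slim) : H.B u w = H.B w u := by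
  by_cases h : H.adj u.1 w.1
  · rw [B_of_adj H u w h, B_of_adj H w u (H.symm h), H.commonFat_comm]
  · have h' : ¬ H.adj w.1 u.1 := fun hc => h (H.symm hc)
    rw [B_of_nadj H u w h, B_of_nadj H w u h', H.commonFat_comm]

lemma B_herm : H.B.IsHermitian := by
  ext u w
  rw [Matrix.conjTranspose_apply, star_trivial]
  exact B_symm_entry H w u

lemma B_int (u w : H.Slim) : ∃ k : ℤ,
    H.B u w = (k : ℝ) ∧ ((H.adj u.1 w.1 ∧ k = 1 - ((H.commonFat u.1 w.1).ncard : ℤ)) ∨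
      (¬ H.adj u.1 w.1 ∧ k = -((H.commonFat u.1 w.1).ncard : ℤ))) := by
  by_cases h : H.adj u.1 w.1
  · exact ⟨1 - ((H.commonFat u.1 w.1).ncard : ℤ), by rw [B_of_adj H u w h]; push_cast; ring,
      Or.inl ⟨h, rfl⟩⟩
  · exact ⟨-((H.commonFat u.1 w.1).ncard : ℤ), by rw [B_of_nadj H u w h]; push_cast; ring,
      Or.inr ⟨h, rfl⟩⟩

lemma commonFat_self (x : V) : H.commonFat x x = H.fatNbrs x := by
  ext f
  simp only [HoffmanGraph.commonFat, HoffmanGraph.fatNbrs, Set.mem_setOf_eq]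
  tauto

lemma commonFat_subset_left (x y : V) : H.commonFat x y ⊆ H.fatNbrs x :=
  fun f hf => ⟨hf.1, hf.2.1⟩

lemma commonFat_subset_right (x y : V) : H.commonFat x y ⊆ H.fatNbrs y :=
  fun f hf => ⟨hf.1, hf.2.2⟩

lemma B_diag (u : H.Slim) : H.B u u = -(((H.fatNbrs u.1).ncard : ℝ)) := by
  rw [B_of_nadj H u u (H.loopless u.1), commonFat_self]

/-- cross-compatibility condition between two slim vertices -/
def CrossOK (H : HoffmanGraph V) (x y : V) : Prop :=
  (H.commonFat x y).ncard ≤ 1 ∧ ((H.commonFat x y).ncard = 1 ↔ H.adj x y)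

lemma crossOK_symm {H : HoffmanGraph V} {x y : V} (h : CrossOK H x y) : CrossOK H y x := by
  rw [CrossOK, H.commonFat_comm]
  exact ⟨h.1, h.2.trans ⟨fun a => H.symm a, fun a => H.symm a⟩⟩

lemma crossOK_of_B_zero {u w : H.Slim} (h : H.B u w = 0) : CrossOK H u.1 w.1 := by
  by_cases ha : H.adj u.1 w.1
  · rw [B_of_adj H u w ha] at h
    have hcast : ((H.commonFat u.1 w.1).ncard : ℝ) = 1 := by linarith
    have hc : (H.commonFat u.1 w.1).ncard = 1 := by exact_mod_cast hcast
    exact ⟨le_of_eq hc, by simp [hc, ha]⟩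
  · rw [B_of_nadj H u w ha] at h
    have hcast : ((H.commonFat u.1 w.1).ncard : ℝ) = 0 := by
      have := neg_eq_zero.mp h
      linarith [this]
    have hc : (H.commonFat u.1 w.1).ncard = 0 := by exact_mod_cast hcast
    refine ⟨by omega, ?_⟩
    constructor
    · intro h1; omega
    · intro h1; exact absurd h1 ha

/-- The key decomposition construction. -/
lemma decomposable_of_core (H : HoffmanGraph V) (P : V → Prop)
    (hPslim : ∀ v, P v → ¬ H.fat v)
    (hP0 : ∃ v, P v)
    (hP1 : ∃ v, ¬ H.fat v ∧ ¬ P v)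
    (hcross : ∀ u w, P u → ¬ H.fat w → ¬ P w → CrossOK H u w) :
    H.Decomposable := by
  classical
  set W0 : Finset V := Finset.univ.filter (fun v => P v ∨ (H.fat v ∧ ∃ s, P s ∧ H.adj v s))
    with hW0def
  set W1 : Finset V := Finset.univ.filter (fun v => (¬ H.fat v ∧ ¬ P v) ∨
      (H.fat v ∧ ∃ s, ¬ H.fat s ∧ ¬ P s ∧ H.adj v s)) with hW1def
  have memW0 : ∀ v : V, v ∈ W0 ↔ (P v ∨ (H.fat v ∧ ∃ s, P s ∧ H.adj v s)) := by
    intro v; rw [hW0def]; simp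
  have memW1 : ∀ v : V, v ∈ W1 ↔ ((¬ H.fat v ∧ ¬ P v) ∨
      (H.fat v ∧ ∃ s, ¬ H.fat s ∧ ¬ P s ∧ H.adj v s)) := by
    intro v; rw [hW1def]; simp
  have hi2 : ∀ i : Fin 2, i = 0 ∨ i = 1 := by decide
  have hne10 : (1 : Fin 2) ≠ 0 := by decide
  refine ⟨2, le_refl 2, fun i => if i = 0 then W0 else W1, ?_⟩
  have disj : ∀ x : V, ¬ H.fat x → x ∈ W0 → x ∈ W1 → False := by
    intro x hslim hx0 hx1
    rw [memW0] at hx0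
    rw [memW1] at hx1
    rcases hx0 with hP | ⟨hf, _⟩
    · rcases hx1 with ⟨_, hnP⟩ | ⟨hf, _⟩
      · exact hnP hP
      · exact hslim hf
    · exact hslim hf
  constructor
  · intro i
    rcases hi2 i with rfl | rfl
    · rw [if_pos rfl]
      obtain ⟨v, hv⟩ := hP0
      exact ⟨v, (memW0 v).mpr (Or.inl hv)⟩
    · rw [if_neg hne10]
      obtain ⟨v, hv1, hv2⟩ := hP1
      exact ⟨v, (memW1 v).mpr (Or.inl ⟨hv1, hv2⟩)⟩
  · intro v
    by_cases hf : H.fat v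
    · obtain ⟨s, hadj, hs⟩ := H.fat_slim v hf
      by_cases hPs : P s
      · exact ⟨0, by rw [if_pos rfl]; exact (memW0 v).mpr (Or.inr ⟨hf, s, hPs, hadj⟩)⟩
      · refine ⟨1, ?_⟩
        rw [if_neg hne10]
        exact (memW1 v).mpr (Or.inr ⟨hf, s, hs, hPs, hadj⟩)
    · by_cases hPv : P v
      · exact ⟨0, by rw [if_pos rfl]; exact (memW0 v).mpr (Or.inl hPv)⟩
      · refine ⟨1, ?_⟩
        rw [if_neg hne10]
        exact (memW1 v).mpr (Or.inl ⟨hf, hPv⟩)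
  · intro i j hij x hslim hxi hxj
    rcases hi2 i with rfl | rfl <;> rcases hi2 j with rfl | rfl
    · exact hij rfl
    · rw [if_pos rfl] at hxi
      rw [if_neg hne10] at hxj
      exact disj x hslim hxi hxj
    · rw [if_pos rfl] at hxj
      rw [if_neg hne10] at hxi
      exact disj x hslim hxj hxi
    · exact hij rfl
  · intro i x y hxi hxslim hyfat hadj
    rcases hi2 i with rfl | rfl
    · rw [if_pos rfl] at hxi ⊢
      rcases (memW0 x).mp hxi with hPx | ⟨hf, _⟩
      · exact (memW0 y).mpr (Or.inr ⟨hyfat, x, hPx, H.symm hadj⟩)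
      · exact absurd hf hxslim
    · rw [if_neg hne10] at hxi ⊢
      rcases (memW1 x).mp hxi with ⟨hnf, hnP⟩ | ⟨hf, _⟩
      · exact (memW1 y).mpr (Or.inr ⟨hyfat, x, hnf, hnP, H.symm hadj⟩)
      · exact absurd hf hxslim
  · intro i y hyi hyfat
    rcases hi2 i with rfl | rfl
    · rw [if_pos rfl] at hyi ⊢
      rcases (memW0 y).mp hyi with hPy | ⟨_, s, hPs, hadj⟩
      · exact absurd hyfat (hPslim y hPy)
      · exact ⟨s, (memW0 s).mpr (Or.inl hPs), hPslim s hPs, hadj⟩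
    · rw [if_neg hne10] at hyi ⊢
      rcases (memW1 y).mp hyi with ⟨hnf, _⟩ | ⟨_, s, hsf, hPs, hadj⟩
      · exact absurd hyfat hnf
      · exact ⟨s, (memW1 s).mpr (Or.inl ⟨hsf, hPs⟩), hsf, hadj⟩
  · intro i j hij x y hxi hyj hxs hys
    have key : ∀ u w : V, u ∈ W0 → w ∈ W1 → ¬ H.fat u → ¬ H.fat w → CrossOK H u w := by
      intro u w hu hw huf hwf
      rcases (memW0 u).mp hu with hPu | ⟨hf, _⟩
      · rcases (memW1 w).mp hw with ⟨_, hnPw⟩ | ⟨hf, _⟩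
        · exact hcross u w hPu hwf hnPw
        · exact absurd hf hwf
      · exact absurd hf huf
    rcases hi2 i with rfl | rfl <;> rcases hi2 j with rfl | rfl
    · exact absurd rfl hij
    · rw [if_pos rfl] at hxi
      rw [if_neg hne10] at hyj
      exact key x y hxi hyj hxs hys
    · rw [if_pos rfl] at hyj
      rw [if_neg hne10] at hxi
      exact crossOK_symm (key y x hyj hxi hys hxs)
    · exact absurd rfl hij

end Hoffman

section Iso

open HoffmanGraph

variable {V : Type*} (H : HoffmanGraph V)

lemma q101_pos_ll (i j : Fin 1) : ¬ (Q 1 0 1).pos (Sum.inl i) (Sum.inl j) := by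
  rintro (⟨a, b, h1, h2, h3⟩ | ⟨a, b, h1, h2, h3⟩ | ⟨a, b, h1, h2, h3⟩)
  · exact absurd h2 (by simp)
  · exact absurd h2 (by simp)
  · exact absurd h1 (by simp)

lemma q101_pos_rr (i j : Fin 1) :
    ¬ (Q 1 0 1).pos (Sum.inr (Sum.inr i)) (Sum.inr (Sum.inr j)) := by
  rintro (⟨a, b, h1, h2, h3⟩ | ⟨a, b, h1, h2, h3⟩ | ⟨a, b, h1, h2, h3⟩)
  · exact absurd h1 (by simp)
  · exact absurd h1 (by simp)
  · exact absurd (Subsingleton.elim a b) h3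

lemma q101_neg (u v : Fin 1 ⊕ Fin 0 ⊕ Fin 1) : ¬ (Q 1 0 1).neg u v := by
  rintro (⟨j, k, h1, h2, h3⟩ | ⟨j, k, h1, h2, h3⟩) <;> exact j.elim0

lemma q011_pos (u v : Fin 0 ⊕ Fin 1 ⊕ Fin 1)
    (h : ∀ a b : Fin 1, ¬ (u = Sum.inr (Sum.inr a) ∧ v = Sum.inr (Sum.inr b))) :
    ¬ (Q 0 1 1).pos u v := by
  rintro (⟨a, b, h1, h2, h3⟩ | ⟨a, b, h1, h2, h3⟩ | ⟨a, b, h1, h2, h3⟩)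
  · exact a.elim0
  · exact a.elim0
  · exact h a b ⟨h1, h2⟩

lemma q011_pos_rr (i j : Fin 1) :
    ¬ (Q 0 1 1).pos (Sum.inr (Sum.inr i)) (Sum.inr (Sum.inr j)) := by
  rintro (⟨a, b, h1, h2, h3⟩ | ⟨a, b, h1, h2, h3⟩ | ⟨a, b, h1, h2, h3⟩)
  · exact a.elim0
  · exact a.elim0
  · exact absurd (Subsingleton.elim a b) h3

lemma q011_neg_ll (i j : Fin 1) :
    ¬ (Q 0 1 1).neg (Sum.inr (Sum.inl i)) (Sum.inr (Sum.inl j)) := by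
  rintro (⟨a, b, h1, h2, h3⟩ | ⟨a, b, h1, h2, h3⟩)
  · exact absurd h2 (by simp)
  · exact absurd h2 (by simp)

lemma q011_neg_rr (i j : Fin 1) :
    ¬ (Q 0 1 1).neg (Sum.inr (Sum.inr i)) (Sum.inr (Sum.inr j)) := by
  rintro (⟨a, b, h1, h2, h3⟩ | ⟨a, b, h1, h2, h3⟩)
  · exact absurd h1 (by simp)
  · exact absurd h1 (by simp)

noncomputable def iso001 (xs : H.Slim) (hone : ∀ z : H.Slim, z = xs) :
    EdgeSignedIso H.special (Q 0 0 1) := by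
  refine ⟨⟨fun _ => Sum.inr (Sum.inr 0), fun _ => xs, fun z => (hone z).symm, ?_⟩, ?_, ?_⟩
  · rintro (a | a | a)
    · exact a.elim0
    · exact a.elim0
    · exact congrArg (fun t => Sum.inr (Sum.inr t)) (Subsingleton.elim _ _)
  · intro u v
    constructor
    · rintro ⟨hadj, -⟩
      rw [hone u, hone v] at hadj
      exact absurd hadj (H.loopless _)
    · rintro (⟨i, k, h1, h2, h3⟩ | ⟨i, k, h1, h2, h3⟩ | ⟨k, l, h1, h2, h3⟩)
      · exact i.elim0
      · exact i.elim0
      · exact absurd (Subsingleton.elim k l) h3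
  · intro u v
    constructor
    · rintro ⟨hne, -⟩
      exact absurd ((hone u).trans (hone v).symm) hne
    · rintro (⟨j, k, h1, h2, h3⟩ | ⟨j, k, h1, h2, h3⟩)
      · exact j.elim0
      · exact j.elim0

noncomputable def iso101 (xs y : H.Slim) (hxy : xs ≠ y)
    (hall : ∀ z : H.Slim, z = xs ∨ z = y)
    (ha : H.adj xs.1 y.1) (hcf : H.commonFat xs.1 y.1 = ∅) :
    EdgeSignedIso H.special (Q 1 0 1) := by
  classical
  have hyx : y ≠ xs := hxy.symm
  refine ⟨⟨fun z => if z = xs then Sum.inl 0 else Sum.inr (Sum.inr 0),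
    fun w => match w with
      | Sum.inl _ => xs
      | Sum.inr (Sum.inl a) => a.elim0
      | Sum.inr (Sum.inr _) => y, ?_, ?_⟩, ?_, ?_⟩
  · intro z
    rcases hall z with rfl | rfl
    · dsimp only
      rw [if_pos rfl]
    · dsimp only
      rw [if_neg hyx]
  · rintro (a | a | a)
    · dsimp only
      rw [if_pos rfl]
      exact congrArg Sum.inl (Subsingleton.elim _ _)
    · exact a.elim0
    · dsimp only
      rw [if_neg hyx]
      exact congrArg (fun t => Sum.inr (Sum.inr t)) (Subsingleton.elim _ _)
  · intro u v
    rcases hall u with rfl | rfl <;> rcases hall v with rfl | rfl <;>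
      simp only [Equiv.coe_fn_mk, if_true, if_neg hyx]
    · exact ⟨fun hp => absurd hp.1 (H.loopless _), fun hp => absurd hp (q101_pos_ll 0 0)⟩
    · exact ⟨fun _ => Or.inl ⟨0, 0, rfl, rfl, rfl⟩, fun _ => ⟨ha, hcf⟩⟩
    · refine ⟨fun _ => Or.inr (Or.inl ⟨0, 0, rfl, rfl, rfl⟩), fun _ => ⟨H.symm ha, ?_⟩⟩
      rw [H.commonFat_comm]
      exact hcf
    · exact ⟨fun hp => absurd hp.1 (H.loopless _), fun hp => absurd hp (q101_pos_rr 0 0)⟩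
  · intro u v
    rcases hall u with rfl | rfl <;> rcases hall v with rfl | rfl <;>
      simp only [Equiv.coe_fn_mk, if_true, if_neg hyx]
    · exact ⟨fun hn => absurd rfl hn.1, fun hn => absurd hn (q101_neg _ _)⟩
    · exact ⟨fun hn => absurd ha hn.2.1, fun hn => absurd hn (q101_neg _ _)⟩
    · exact ⟨fun hn => absurd (H.symm ha) hn.2.1, fun hn => absurd hn (q101_neg _ _)⟩
    · exact ⟨fun hn => absurd rfl hn.1, fun hn => absurd hn (q101_neg _ _)⟩

noncomputable def iso011 (xs y : H.Slim) (hxy : xs ≠ y)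
    (hall : ∀ z : H.Slim, z = xs ∨ z = y)
    (hna : ¬ H.adj xs.1 y.1) (hcf : (H.commonFat xs.1 y.1).Nonempty) :
    EdgeSignedIso H.special (Q 0 1 1) := by
  classical
  have hyx : y ≠ xs := hxy.symm
  have hna' : ¬ H.adj y.1 xs.1 := fun hh => hna (H.symm hh)
  refine ⟨⟨fun z => if z = xs then Sum.inr (Sum.inl 0) else Sum.inr (Sum.inr 0),
    fun w => match w with
      | Sum.inl a => a.elim0
      | Sum.inr (Sum.inl _) => xs
      | Sum.inr (Sum.inr _) => y, ?_, ?_⟩, ?_, ?_⟩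
  · intro z
    rcases hall z with rfl | rfl
    · dsimp only
      rw [if_pos rfl]
    · dsimp only
      rw [if_neg hyx]
  · rintro (a | a | a)
    · exact a.elim0
    · dsimp only
      rw [if_pos rfl]
      exact congrArg (fun t => Sum.inr (Sum.inl t)) (Subsingleton.elim _ _)
    · dsimp only
      rw [if_neg hyx]
      exact congrArg (fun t => Sum.inr (Sum.inr t)) (Subsingleton.elim _ _)
  · intro u v
    rcases hall u with rfl | rfl <;> rcases hall v with rfl | rfl <;>
      simp only [Equiv.coe_fn_mk, if_true, if_neg hyx]
    · exact ⟨fun hp => absurd hp.1 (H.loopless _),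
        fun hp => absurd hp (q011_pos _ _ (by rintro a b ⟨h1, -⟩; exact absurd h1 (by simp)))⟩
    · exact ⟨fun hp => absurd hp.1 hna,
        fun hp => absurd hp (q011_pos _ _ (by rintro a b ⟨h1, -⟩; exact absurd h1 (by simp)))⟩
    · exact ⟨fun hp => absurd hp.1 hna',
        fun hp => absurd hp (q011_pos _ _ (by rintro a b ⟨-, h2⟩; exact absurd h2 (by simp)))⟩
    · exact ⟨fun hp => absurd hp.1 (H.loopless _), fun hp => absurd hp (q011_pos_rr 0 0)⟩
  · intro u v
    rcases hall u with rfl | rfl <;> rcases hall v with rfl | rfl <;>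
      simp only [Equiv.coe_fn_mk, if_true, if_neg hyx]
    · exact ⟨fun hn => absurd rfl hn.1, fun hn => absurd hn (q011_neg_ll 0 0)⟩
    · exact ⟨fun _ => Or.inl ⟨0, 0, rfl, rfl, rfl⟩, fun _ => ⟨hxy, hna, hcf⟩⟩
    · refine ⟨fun _ => Or.inr ⟨0, 0, rfl, rfl, rfl⟩, fun _ => ⟨hyx, hna', ?_⟩⟩
      rw [H.commonFat_comm]
      exact hcf
    · exact ⟨fun hn => absurd rfl hn.1, fun hn => absurd hn (q011_neg_rr 0 0)⟩

end Iso

end Aux13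

/-- Lemma 4.4. Let `H` be a fat indecomposable Hoffman graph with
`λ_min(H) ≥ −1−τ`. If some slim vertex has at least two fat neighbors, then `H` has
at most two slim vertices; that is, `S(H)` is isomorphic to `Q_{0,0,1}`, `Q_{1,0,1}`,
or `Q_{0,1,1}`. -/
theorem statement13 {V : Type*} [Fintype V] (H : HoffmanGraph V)
    (hfat : H.IsFat) (hind : ¬ H.Decomposable)
    (h : H.lamMin ≥ -1 - (1 + Real.sqrt 5) / 2)
    (hx : ∃ x : V, ¬ H.fat x ∧ 2 ≤ (H.fatNbrs x).ncard) :
    Fintype.card H.Slim ≤ 2 ∧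
      (Nonempty (EdgeSignedIso H.special (Q 0 0 1)) ∨
       Nonempty (EdgeSignedIso H.special (Q 1 0 1)) ∨
       Nonempty (EdgeSignedIso H.special (Q 0 1 1))) := by
  letI : DecidableEq H.Slim := Classical.decEq _
  letI : DecidableEq V := Classical.decEq _
  obtain ⟨x, hxslim, hx2⟩ := hx
  set s5 := Real.sqrt 5 with hs5def
  have hs5 : s5 ^ 2 = 5 := Real.sq_sqrt (by norm_num)
  have hs5nn : 0 ≤ s5 := Real.sqrt_nonneg 5
  have hs5lt3 : s5 < 3 := Aux13.sqrt5_lt_3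
  have hs5gt2 : 2 < s5 := Aux13.sqrt5_gt_2
  have hc : -1 - (1 + s5) / 2 ≤ minEig H.B := h
  have hB := Aux13.B_herm H
  have hquad : ∀ v : H.Slim → ℝ,
      (-1 - (1 + s5) / 2) * (dotProduct v v) ≤ dotProduct v (H.B.mulVec v) :=
    fun v => Aux13.quad_lower H.B hB hc v
  have hm2 : ∀ u : H.Slim, (H.fatNbrs u.1).ncard ≤ 2 := by
    intro u
    have h1 := hquad (Aux13.sv u)
    rw [Aux13.dot_sv, Aux13.dot_sv_self, Aux13.B_diag] at h1
    have h2 : ((H.fatNbrs u.1).ncard : ℝ) < 3 := by linarith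
    have h3 : (H.fatNbrs u.1).ncard < 3 := by exact_mod_cast h2
    omega
  have hm1 : ∀ u : H.Slim, 1 ≤ (H.fatNbrs u.1).ncard := by
    intro u
    obtain ⟨f, hf, hadj⟩ := hfat u.1 u.2
    have hne : (H.fatNbrs u.1).Nonempty := ⟨f, hf, hadj⟩
    have := (Set.ncard_pos (Set.toFinite _)).mpr hne
    omega
  set xs : H.Slim := ⟨x, hxslim⟩ with hxsdef
  have hmx : (H.fatNbrs xs.1).ncard = 2 := le_antisymm (hm2 xs) hx2
  have hpair : ∀ u w : H.Slim, u ≠ w → ∀ e : ℝ, e = 1 ∨ e = -1 →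
      (-1 - (1 + s5) / 2) * 2 ≤ H.B u u + H.B w w + 2 * e * H.B u w := by
    intro u w huw e he
    have h1 := hquad (Aux13.vv u w 1 e)
    rw [Aux13.dot_vv u w huw, Aux13.dot_vv_self u w huw] at h1
    have hee : e * e = 1 := by rcases he with rfl | rfl <;> norm_num
    have hsym := Aux13.B_symm_entry H u w
    have heq : (1:ℝ) * 1 * H.B u u + 1 * e * (H.B u w + H.B w u) + e * e * H.B w w
        = H.B u u + H.B w w + 2 * e * H.B u w := by
      rw [← hsym]
      linear_combination H.B w w * hee
    rw [heq] at h1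
    calc (-1 - (1 + s5) / 2) * 2 = (-1 - (1 + s5) / 2) * ((1:ℝ) * 1 + e * e) := by
          rw [hee]; ring
      _ ≤ _ := h1
  have hBzero22 : ∀ u w : H.Slim, u ≠ w → (H.fatNbrs u.1).ncard = 2 →
      (H.fatNbrs w.1).ncard = 2 → H.B u w = 0 := by
    intro u w huw hu2 hw2
    obtain ⟨k, hk, -⟩ := Aux13.B_int H u w
    have h1 := hpair u w huw 1 (Or.inl rfl)
    have h2 := hpair u w huw (-1) (Or.inr rfl)
    rw [Aux13.B_diag H u, Aux13.B_diag H w, hu2, hw2, hk] at h1 h2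
    push_cast at h1 h2
    have hklt : (k : ℝ) < 1 := by linarith
    have hkgt : (-1 : ℝ) < (k : ℝ) := by linarith
    have hk1 : k < 1 := by exact_mod_cast hklt
    have hk2 : (-1 : ℤ) < k := by exact_mod_cast hkgt
    have hk0 : k = 0 := by omega
    rw [hk, hk0]
    norm_num
  by_cases hone : ∀ z : H.Slim, z = xs
  · constructor
    · have hsub : (Finset.univ : Finset H.Slim) ⊆ {xs} := by
        intro z _
        rw [hone z]
        simp
      calc Fintype.card H.Slim = Finset.univ.card := rfl
        _ ≤ ({xs} : Finset H.Slim).card := Finset.card_le_card hsub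
        _ ≤ 2 := by simp
    · left
      exact ⟨Aux13.iso001 H xs hone⟩
  · push_neg at hone
    obtain ⟨y0, hy0⟩ := hone
    have hy0x : y0.1 ≠ x := fun hh => hy0 (Subtype.ext hh)
    have hviol : ∃ w : H.Slim, w.1 ≠ x ∧ ¬ Aux13.CrossOK H x w.1 := by
      by_contra hcon
      push_neg at hcon
      refine hind (Aux13.decomposable_of_core H (fun v => v = x) ?_ ⟨x, rfl⟩
        ⟨y0.1, y0.2, hy0x⟩ ?_)
      · intro v hv; rw [hv]; exact hxslim
      · intro u w hu hwslim hwP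
        subst hu
        exact hcon ⟨w, hwslim⟩ hwP
    obtain ⟨y, hyx, hyviol⟩ := hviol
    have hxy : xs ≠ y := fun hh => hyx (by rw [← hh])
    have hyxs : y ≠ xs := fun hh => hxy hh.symm
    have hmy : (H.fatNbrs y.1).ncard = 1 := by
      have hle := hm2 y
      have hge := hm1 y
      rcases Nat.lt_or_ge (H.fatNbrs y.1).ncard 2 with hlt | hge2
      · omega
      · exfalso
        have h2 : (H.fatNbrs y.1).ncard = 2 := by omega
        have hb0 := hBzero22 xs y hxy hmx h2
        exact hyviol (Aux13.crossOK_of_B_zero H hb0)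
    have hcxy : (H.commonFat x y.1).ncard ≤ 1 := by
      have hsub := Set.ncard_le_ncard (Aux13.commonFat_subset_right H x y.1) (Set.toFinite _)
      have : (H.fatNbrs y.1).ncard = 1 := hmy
      omega
    have hsign : (H.adj x y.1 ∧ (H.commonFat x y.1).ncard = 0 ∧ H.B xs y = 1) ∨
        (¬ H.adj x y.1 ∧ (H.commonFat x y.1).ncard = 1 ∧ H.B xs y = -1) := by
      by_cases ha : H.adj x y.1
      · have hc0' : (H.commonFat x y.1).ncard = 0 := by
          rcases Nat.eq_zero_or_pos (H.commonFat x y.1).ncard with h0 | hpos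
          · exact h0
          · exfalso
            have hc1 : (H.commonFat x y.1).ncard = 1 := by omega
            exact hyviol ⟨hcxy, by simp [hc1, ha]⟩
        refine Or.inl ⟨ha, hc0', ?_⟩
        rw [Aux13.B_of_adj H xs y ha]
        rw [show (H.commonFat xs.1 y.1).ncard = 0 from hc0']
        norm_num
      · have hc1 : (H.commonFat x y.1).ncard = 1 := by
          rcases Nat.eq_zero_or_pos (H.commonFat x y.1).ncard with h0 | hpos
          · exfalso
            refine hyviol ⟨hcxy, ?_⟩
            constructor
            · intro hh; omega
            · intro hh; exact absurd hh ha
          · omega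
        refine Or.inr ⟨ha, hc1, ?_⟩
        rw [Aux13.B_of_nadj H xs y ha]
        rw [show (H.commonFat xs.1 y.1).ncard = 1 from hc1]
        norm_num
    have hε2 : H.B xs y * H.B xs y = 1 := by
      rcases hsign with ⟨-, -, hb⟩ | ⟨-, -, hb⟩ <;> rw [hb] <;> norm_num
    have hquadeq : dotProduct (Aux13.vv xs y (H.B xs y) ((1 - s5) / 2))
        (H.B.mulVec (Aux13.vv xs y (H.B xs y) ((1 - s5) / 2)))
        = (-1 - (1 + s5) / 2) * (dotProduct (Aux13.vv xs y (H.B xs y) ((1 - s5) / 2))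
            (Aux13.vv xs y (H.B xs y) ((1 - s5) / 2))) := by
      rw [Aux13.dot_vv xs y hxy, Aux13.dot_vv_self xs y hxy]
      rw [Aux13.B_diag H xs, Aux13.B_diag H y, hmx, hmy]
      rw [← Aux13.B_symm_entry H xs y]
      push_cast
      linear_combination (-2 + 2 * ((1 - s5)/2) - (-1 - (1 + s5) / 2)) * hε2
        + ((s5 - 1) / 8) * hs5
    have heig := Aux13.quad_eq_eigen H.B hB hc _ hquadeq
    have hzero : ∀ z : H.Slim, z ≠ xs → z ≠ y → H.B z xs = 0 ∧ H.B z y = 0 := by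
      intro z hzx hzy
      have hrow1 : (H.B.mulVec (Aux13.vv xs y (H.B xs y) ((1 - s5) / 2))) z
          = H.B z xs * (H.B xs y) + H.B z y * ((1 - s5) / 2) := by
        simp only [Matrix.mulVec, dotProduct]
        exact Aux13.sum_vv xs y hxy _ _ (H.B z)
      have hrow2 : (H.B.mulVec (Aux13.vv xs y (H.B xs y) ((1 - s5) / 2))) z = 0 := by
        rw [heig]
        simp only [Pi.smul_apply, smul_eq_mul]
        rw [Aux13.vv_other hzx hzy]
        ring
      have heqn : H.B z xs * (H.B xs y) + H.B z y * ((1 - s5) / 2) = 0 := by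
        rw [← hrow1, hrow2]
      obtain ⟨k1, hk1, -⟩ := Aux13.B_int H z xs
      obtain ⟨k2, hk2, -⟩ := Aux13.B_int H z y
      rcases hsign with ⟨-, -, hb⟩ | ⟨-, -, hb⟩
      · rw [hb, hk1, hk2] at heqn
        have hirr : ((k2 : ℝ)) * s5 = ((2 * k1 + k2 : ℤ) : ℝ) := by
          push_cast
          linarith
        obtain ⟨hm0, hk0⟩ := Aux13.int_mul_sqrt5 hirr
        have hk10 : k1 = 0 := by omega
        rw [hk1, hk2, hm0, hk10]
        norm_num
      · rw [hb, hk1, hk2] at heqn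
        have hirr : ((k2 : ℝ)) * s5 = ((-2 * k1 + k2 : ℤ) : ℝ) := by
          push_cast
          linarith
        obtain ⟨hm0, hk0⟩ := Aux13.int_mul_sqrt5 hirr
        have hk10 : k1 = 0 := by omega
        rw [hk1, hk2, hm0, hk10]
        norm_num
    have hall2 : ∀ z : H.Slim, z = xs ∨ z = y := by
      by_contra hcon
      push_neg at hcon
      obtain ⟨z, hz1, hz2⟩ := hcon
      refine hind (Aux13.decomposable_of_core H (fun v => v = xs.1 ∨ v = y.1) ?_
        ⟨xs.1, Or.inl rfl⟩ ⟨z.1, z.2, ?_⟩ ?_)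
      · intro v hv
        rcases hv with rfl | rfl
        · exact xs.2
        · exact y.2
      · intro hcv
        rcases hcv with hh | hh
        · exact hz1 (Subtype.ext hh)
        · exact hz2 (Subtype.ext hh)
      · intro u w hu hwslim hwP
        rw [not_or] at hwP
        have hwx : (⟨w, hwslim⟩ : H.Slim) ≠ xs := fun hh => hwP.1 (congrArg Subtype.val hh)
        have hwy : (⟨w, hwslim⟩ : H.Slim) ≠ y := fun hh => hwP.2 (congrArg Subtype.val hh)
        have h1 := hzero ⟨w, hwslim⟩ hwx hwy
        rcases hu with rfl | rfl
        · exact Aux13.crossOK_symm (Aux13.crossOK_of_B_zero H h1.1)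
        · exact Aux13.crossOK_symm (Aux13.crossOK_of_B_zero H h1.2)
    constructor
    · have hsub : (Finset.univ : Finset H.Slim) ⊆ {xs, y} := by
        intro z _
        rcases hall2 z with rfl | rfl <;> simp
      calc Fintype.card H.Slim = Finset.univ.card := rfl
        _ ≤ ({xs, y} : Finset H.Slim).card := Finset.card_le_card hsub
        _ ≤ 2 := (Finset.card_insert_le xs {y}).trans (by simp)
    · rcases hsign with ⟨ha, hcf, -⟩ | ⟨ha, hcf, -⟩
      · right; left
        refine ⟨Aux13.iso101 H xs y hxy hall2 ha ?_⟩
        exact (Set.ncard_eq_zero (Set.toFinite _)).mp hcf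
      · right; right
        refine ⟨Aux13.iso011 H xs y hxy hall2 ha ?_⟩
        refine (Set.ncard_pos (Set.toFinite _)).mp ?_
        have h1 : (H.commonFat xs.1 y.1).ncard = 1 := hcf
        omega
end

section
/- Let 𝔥 be a Hoffman graph in which every slim vertex has at most one fat neighbor. Then the special graph S(𝔥) contains no induced edge-signed subgraph isomorphic to T_1, the edge-signed triangle with exactly one (+)-edge and two (−)-edges. -/
/-- If every slim vertex of a Hoffman graph `H` has at most one
fat neighbor, then the special graph `S(H)` contains no induced edge-signed subgraph
isomorphic to `T₁`. -/
theorem statement14 {V : Type*} [Fintype V] (H : HoffmanGraph V)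
    (h1 : ∀ x : V, ¬ H.fat x → (H.fatNbrs x).ncard ≤ 1) :
    ¬ H.special.HasInduced T1 := by
  rintro ⟨f, hf, hpos, hneg⟩
  have hab := (hpos 0 1).mp (Or.inl ⟨rfl, rfl⟩)
  have hac := (hneg 0 2).mp ⟨by decide, Or.inr rfl⟩
  have hbc := (hneg 1 2).mp ⟨by decide, Or.inr rfl⟩
  obtain ⟨g, hg, hga, hgc⟩ := hac.2.2
  obtain ⟨g', hg', hgb, hgc'⟩ := hbc.2.2
  have hcfat := h1 (f 2).1 (f 2).2
  have hgg' : g = g' := by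
    have := (Set.ncard_le_one (Set.toFinite _)).mp hcfat
    exact this g ⟨hg, hgc⟩ g' ⟨hg', hgc'⟩
  subst hgg'
  have : g ∈ H.commonFat (f 0).1 (f 1).1 := ⟨hg, hga, hgb⟩
  rw [hab.2] at this
  exact this
end

section
/- Let 𝔥 be a Hoffman graph in which every slim vertex has exactly one fat neighbor, and suppose its special graph S(𝔥) is isomorphic to Q_{p,q,r} for some nonnegative integers p, q, r with p + q ≤ r and r ≥ 2. Then 𝔥 is (−1−τ)-reducible, where τ = (1+√5)/2. -/
/-! ### Auxiliary material for statement15 -/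

section Statement15Aux

open Sum Matrix Finset

lemma stmt15_minEig_ge {n : Type*} [Fintype n] (M : Matrix n n ℝ) (α : ℝ) (hα : α ≤ 0)
    (h : ∀ v : n → ℝ, α * (v ⬝ᵥ v) ≤ v ⬝ᵥ M.mulVec v) : α ≤ minEig M := by
  unfold minEig
  set S := {t : ℝ | ∃ v : n → ℝ, v ≠ 0 ∧ M.mulVec v = t • v} with hS
  rcases Set.eq_empty_or_nonempty S with he | hne
  · rw [he, Real.sInf_empty]; exact hα
  · apply le_csInf hne
    rintro t ⟨v, hv0, hv⟩
    have hvv : 0 < v ⬝ᵥ v := by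
      rcases lt_or_eq_of_le (Finset.sum_nonneg (fun i _ => mul_self_nonneg (v i))) with h' | h'
      · exact h'
      · exact absurd (dotProduct_self_eq_zero.mp h'.symm) hv0
    have h2 := h v
    rw [hv, dotProduct_smul] at h2
    have h3 : α * (v ⬝ᵥ v) ≤ t * (v ⬝ᵥ v) := by simpa using h2
    exact le_of_mul_le_mul_right h3 hvv

lemma stmt15_tau_facts : ((1+Real.sqrt 5)/2) * ((1+Real.sqrt 5)/2 - 1) = 1 ∧
    0 < (1+Real.sqrt 5)/2 - 1 := by
  have h5 : Real.sqrt 5 ^ 2 = 5 := Real.sq_sqrt (by norm_num)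
  have h2 : (2:ℝ) ≤ Real.sqrt 5 := by nlinarith [Real.sqrt_nonneg 5]
  constructor
  · nlinarith
  · nlinarith

lemma stmt15_quadQ {p q r : ℕ} (f : Fin p → Fin r) (g : Fin q → Fin r)
    (hf : Function.Injective f) (hg : Function.Injective g)
    (hd : ∀ i j, f i ≠ g j)
    (a : Fin p → ℝ) (b : Fin q → ℝ) (c : Fin r → ℝ) :
    0 ≤ ((1+Real.sqrt 5)/2) * ∑ i, (a i)^2 + ((1+Real.sqrt 5)/2) * ∑ j, (b j)^2
      + ((1+Real.sqrt 5)/2 - 1) * ∑ k, (c k)^2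
      + 2 * ∑ i, a i * c (f i) - 2 * ∑ j, b j * c (g j) := by
  obtain ⟨hτ, hτ1⟩ := stmt15_tau_facts
  set τ : ℝ := (1+Real.sqrt 5)/2 with hτdef
  have e1 : ∑ i, (τ-1)*(c (f i)+τ*a i)^2
      = (τ-1)*∑ i, (c (f i))^2 + 2*∑ i, a i * c (f i) + τ*∑ i, (a i)^2 := by
    rw [Finset.mul_sum, Finset.mul_sum, Finset.mul_sum, ← Finset.sum_add_distrib,
      ← Finset.sum_add_distrib]
    exact Finset.sum_congr rfl (fun i _ => by
      linear_combination (2*(a i)*(c (f i)) + τ*(a i)^2) * hτ)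
  have e2 : ∑ j, (τ-1)*(c (g j)-τ*b j)^2
      = (τ-1)*∑ j, (c (g j))^2 - 2*∑ j, b j * c (g j) + τ*∑ j, (b j)^2 := by
    rw [Finset.mul_sum, Finset.mul_sum, Finset.mul_sum, ← Finset.sum_sub_distrib,
      ← Finset.sum_add_distrib]
    exact Finset.sum_congr rfl (fun j _ => by
      linear_combination (-2*(b j)*(c (g j)) + τ*(b j)^2) * hτ)
  have h1 : 0 ≤ ∑ i, (τ-1)*(c (f i)+τ*a i)^2 :=
    Finset.sum_nonneg (fun i _ => mul_nonneg hτ1.le (sq_nonneg _))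
  have h2 : 0 ≤ ∑ j, (τ-1)*(c (g j)-τ*b j)^2 :=
    Finset.sum_nonneg (fun j _ => mul_nonneg hτ1.le (sq_nonneg _))
  have hdisj : Disjoint (univ.image f) (univ.image g) := by
    rw [Finset.disjoint_left]
    rintro k hk hk'
    obtain ⟨i, -, rfl⟩ := Finset.mem_image.mp hk
    obtain ⟨j, -, hj⟩ := Finset.mem_image.mp hk'
    exact hd i j hj.symm
  have h3 : ∑ i, (c (f i))^2 + ∑ j, (c (g j))^2 ≤ ∑ k, (c k)^2 := by
    have himg : ∑ k ∈ (univ.image f) ∪ (univ.image g), (c k)^2 ≤ ∑ k, (c k)^2 :=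
      Finset.sum_le_sum_of_subset_of_nonneg (Finset.subset_univ _) (fun k _ _ => sq_nonneg _)
    rwa [Finset.sum_union hdisj,
      Finset.sum_image (fun i _ i' _ h => hf h), Finset.sum_image (fun j _ j' _ h => hg h)] at himg
  nlinarith [mul_nonneg hτ1.le (sub_nonneg.2 h3)]

variable {V : Type*} [Fintype V] (H : HoffmanGraph V) {N : ℕ} (e₀ : V ≃ Fin N)
  {p q r : ℕ} (φ : EdgeSignedIso H.special (Q p q r))

/-- `s` is a "clique" slim vertex (mapped into `V_r`). -/
def IsCl (s : H.Slim) : Prop := ∃ k : Fin r, φ.toEquiv s = inr (inr k)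

/-- vertex-level version of `IsCl`. -/
def SlimCl (x : V) : Prop := ∃ h : ¬ H.fat x, IsCl H φ ⟨x, h⟩

lemma slimCl_coe (s : H.Slim) : SlimCl H φ s.1 ↔ IsCl H φ s := by
  constructor
  · rintro ⟨h, hk⟩; exact hk
  · intro h; exact ⟨s.2, h⟩

variable (hr : 2 ≤ r)

/-- The big Hoffman graph `H'`: `H` (transported to `Fin N`) together with one new
fat vertex adjacent to all clique slim vertices. -/
def Hbig : HoffmanGraph (Fin N ⊕ Unit) where
  adj v w := match v, w with
    | inl x, inl y => H.adj (e₀.symm x) (e₀.symm y)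
    | inl x, inr _ => SlimCl H φ (e₀.symm x)
    | inr _, inl y => SlimCl H φ (e₀.symm y)
    | inr _, inr _ => False
  symm := by
    rintro (x|u) (y|v) h
    · exact H.symm h
    · exact h
    · exact h
    · exact h
  loopless := by
    rintro (x|u) h
    · exact H.loopless _ h
    · exact h
  fat := Sum.elim (fun x => H.fat (e₀.symm x)) (fun _ => True)
  fat_slim := by
    rintro (x|u) hf
    · obtain ⟨y, hy1, hy2⟩ := H.fat_slim _ hf
      exact ⟨inl (e₀ y), by simpa using hy1, by simpa using hy2⟩
    · refine ⟨inl (e₀ (φ.toEquiv.symm (inr (inr ⟨0, by omega⟩))).1), ?_, ?_⟩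
      · show SlimCl H φ (e₀.symm (e₀ _))
        rw [Equiv.symm_apply_apply, slimCl_coe]
        exact ⟨⟨0, by omega⟩, φ.toEquiv.apply_symm_apply _⟩
      · simpa using (φ.toEquiv.symm (inr (inr ⟨0, by omega⟩))).2
  fat_nonadj := by
    rintro (x|u) (y|v) hfx hfy h
    · exact H.fat_nonadj _ _ hfx hfy h
    · exact h.1 hfx
    · exact h.1 hfy
    · exact h

attribute [local instance] Classical.propDecidable

lemma Hbig_fat_inl (x : Fin N) :
    (Hbig H e₀ φ hr).fat (inl x) = H.fat (e₀.symm x) := rfl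
lemma Hbig_fat_inr (u : Unit) : (Hbig H e₀ φ hr).fat (inr u) = True := rfl
lemma Hbig_adj_ll (x y : Fin N) :
    (Hbig H e₀ φ hr).adj (inl x) (inl y) = H.adj (e₀.symm x) (e₀.symm y) := rfl
lemma Hbig_adj_lr (x : Fin N) (u : Unit) :
    (Hbig H e₀ φ hr).adj (inl x) (inr u) = SlimCl H φ (e₀.symm x) := rfl
lemma Hbig_adj_rl (u : Unit) (y : Fin N) :
    (Hbig H e₀ φ hr).adj (inr u) (inl y) = SlimCl H φ (e₀.symm y) := rfl
lemma Hbig_adj_rr (u u' : Unit) :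
    (Hbig H e₀ φ hr).adj (inr u) (inr u') = False := rfl

variable (hpq : p + q ≤ r)

/-- index in `Fin r` of the "class" of a slim vertex. -/
def idxF (s : H.Slim) : Fin r :=
  match φ.toEquiv s with
  | inl i => ⟨i.1, by have := i.2; omega⟩
  | inr (inl j) => ⟨p + j.1, by have := j.2; omega⟩
  | inr (inr k) => k

/-- which of the two parts a slim vertex belongs to. -/
def ptF (s : H.Slim) : Fin 2 := if (idxF H φ hpq s).1 = 0 then 1 else 0

lemma idx_of_p {s : H.Slim} {i : Fin p} (hs : φ.toEquiv s = inl i) :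
    (idxF H φ hpq s).1 = i.1 := by simp [idxF, hs]

lemma idx_of_q {s : H.Slim} {j : Fin q} (hs : φ.toEquiv s = inr (inl j)) :
    (idxF H φ hpq s).1 = p + j.1 := by simp [idxF, hs]

lemma idx_of_r {s : H.Slim} {k : Fin r} (hs : φ.toEquiv s = inr (inr k)) :
    (idxF H φ hpq s).1 = k.1 := by simp [idxF, hs]

lemma idx_ne_of_pt_ne {s t : H.Slim} (h : ptF H φ hpq s ≠ ptF H φ hpq t) :
    (idxF H φ hpq s).1 ≠ (idxF H φ hpq t).1 := by
  intro he
  apply h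
  simp only [ptF, he]

/-- the membership predicate for the two parts of the decomposition of `Hbig`. -/
def Pmem (i : Fin 2) : Fin N ⊕ Unit → Prop
  | inl x => (∃ s : H.Slim, e₀ s.1 = x ∧ ptF H φ hpq s = i) ∨
      (H.fat (e₀.symm x) ∧ ∃ s : H.Slim, ptF H φ hpq s = i ∧ H.adj (e₀.symm x) s.1)
  | inr _ => ∃ s : H.Slim, ptF H φ hpq s = i ∧ IsCl H φ s

noncomputable def Wpart (i : Fin 2) : Finset (Fin N ⊕ Unit) :=
  @Finset.filter _ (Pmem H e₀ φ hpq i) (Classical.decPred _) Finset.univ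

lemma mem_Wpart (i : Fin 2) (v : Fin N ⊕ Unit) :
    v ∈ Wpart H e₀ φ hpq i ↔ Pmem H e₀ φ hpq i v := by
  simp [Wpart, Finset.mem_filter]

lemma cf_le_one (h1 : ∀ x : V, ¬ H.fat x → (H.fatNbrs x).ncard = 1)
    (s : H.Slim) (y : V) : (H.commonFat s.1 y).ncard ≤ 1 := by
  have hsub : H.commonFat s.1 y ⊆ H.fatNbrs s.1 := fun f hf => ⟨hf.1, hf.2.1⟩
  have h2 := Set.ncard_le_ncard hsub (Set.toFinite _)
  rwa [h1 s.1 s.2] at h2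

lemma cf_card_iff (h1 : ∀ x : V, ¬ H.fat x → (H.fatNbrs x).ncard = 1)
    {s t : H.Slim} (hst : s ≠ t) (hp : ¬H.special.pos s t)
    (hn : ¬H.special.neg s t) : ((H.commonFat s.1 t.1).ncard = 1 ↔ H.adj s.1 t.1) := by
  constructor
  · intro hc
    by_contra hadj
    exact hn ⟨hst, hadj, Set.nonempty_of_ncard_ne_zero (by omega)⟩
  · intro hadj
    have hne : (H.commonFat s.1 t.1).Nonempty := by
      by_contra he
      rw [Set.not_nonempty_iff_eq_empty] at he
      exact hp ⟨hadj, he⟩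
    have h2 := (Set.ncard_pos (Set.toFinite _)).mpr hne
    have h3 := cf_le_one H h1 s t.1
    omega

lemma no_edge_of_idx_ne {s t : H.Slim} (hne : (idxF H φ hpq s).1 ≠ (idxF H φ hpq t).1)
    (hncl : ¬(IsCl H φ s ∧ IsCl H φ t)) :
    ¬H.special.pos s t ∧ ¬H.special.neg s t := by
  rw [φ.pos_iff s t, φ.neg_iff s t]
  rcases hs : φ.toEquiv s with i | j | k <;> rcases ht : φ.toEquiv t with i' | j' | k'
  · constructor <;> simp [Q]
  · constructor <;> simp [Q]
  · have ha := idx_of_p H φ hpq hs; have hb := idx_of_r H φ hpq ht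
    constructor <;> simp [Q] <;> omega
  · constructor <;> simp [Q]
  · constructor <;> simp [Q]
  · have ha := idx_of_q H φ hpq hs; have hb := idx_of_r H φ hpq ht
    constructor <;> simp [Q] <;> omega
  · have ha := idx_of_r H φ hpq hs; have hb := idx_of_p H φ hpq ht
    constructor <;> simp [Q] <;> omega
  · have ha := idx_of_r H φ hpq hs; have hb := idx_of_q H φ hpq ht
    constructor <;> simp [Q] <;> omega
  · exact absurd ⟨⟨k, hs⟩, ⟨k', ht⟩⟩ hncl

lemma pos_of_cl {s t : H.Slim} {k k' : Fin r} (hs : φ.toEquiv s = inr (inr k))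
    (ht : φ.toEquiv t = inr (inr k')) (hkk : k ≠ k') : H.special.pos s t := by
  rw [φ.pos_iff s t, hs, ht]
  exact Or.inr (Or.inr ⟨k, k', rfl, rfl, hkk⟩)

lemma cfBig_cl {s t : H.Slim} (hcl : IsCl H φ s ∧ IsCl H φ t) :
    (Hbig H e₀ φ hr).commonFat (inl (e₀ s.1)) (inl (e₀ t.1))
      = Sum.inl '' (e₀ '' H.commonFat s.1 t.1) ∪ {inr ()} := by
  ext f
  rcases f with g | u
  · simp only [HoffmanGraph.commonFat, Set.mem_setOf_eq, Hbig_fat_inl, Hbig_adj_ll,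
      Equiv.symm_apply_apply, Set.mem_union, Set.mem_image, Set.mem_singleton_iff]
    constructor
    · rintro ⟨hf, ha, hb⟩
      exact Or.inl ⟨e₀ (e₀.symm g), ⟨e₀.symm g, ⟨hf, ha, hb⟩, rfl⟩, by simp⟩
    · rintro (⟨x, ⟨v, hv, rfl⟩, hx⟩ | h)
      · obtain rfl : g = e₀ v := by simpa using hx.symm
        rw [Equiv.symm_apply_apply]
        exact hv
      · simp at h
  · simp only [HoffmanGraph.commonFat, Set.mem_setOf_eq, Hbig_fat_inr, Hbig_adj_lr,
      Equiv.symm_apply_apply, slimCl_coe, Set.mem_union, Set.mem_image, Set.mem_singleton_iff]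
    constructor
    · intro _; exact Or.inr trivial
    · intro _; exact ⟨trivial, hcl.1, hcl.2⟩

lemma cfBig_ncl {s t : H.Slim} (hncl : ¬(IsCl H φ s ∧ IsCl H φ t)) :
    (Hbig H e₀ φ hr).commonFat (inl (e₀ s.1)) (inl (e₀ t.1))
      = Sum.inl '' (e₀ '' H.commonFat s.1 t.1) := by
  ext f
  rcases f with g | u
  · simp only [HoffmanGraph.commonFat, Set.mem_setOf_eq, Hbig_fat_inl, Hbig_adj_ll,
      Equiv.symm_apply_apply, Set.mem_image]
    constructor
    · rintro ⟨hf, ha, hb⟩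
      exact ⟨e₀ (e₀.symm g), ⟨e₀.symm g, ⟨hf, ha, hb⟩, rfl⟩, by simp⟩
    · rintro ⟨x, ⟨v, hv, rfl⟩, hx⟩
      obtain rfl : g = e₀ v := by simpa using hx.symm
      rw [Equiv.symm_apply_apply]
      exact hv
  · simp only [HoffmanGraph.commonFat, Set.mem_setOf_eq, Hbig_fat_inr, Hbig_adj_lr,
      Equiv.symm_apply_apply, slimCl_coe, Set.mem_image]
    constructor
    · rintro ⟨-, h2, h3⟩
      exact absurd ⟨h2, h3⟩ hncl
    · rintro ⟨x, -, hx⟩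
      exact absurd hx (by simp)

lemma cfBig_ncard (s t : H.Slim) :
    ((Hbig H e₀ φ hr).commonFat (inl (e₀ s.1)) (inl (e₀ t.1))).ncard
      = (H.commonFat s.1 t.1).ncard + (if IsCl H φ s ∧ IsCl H φ t then 1 else 0) := by
  by_cases hcl : IsCl H φ s ∧ IsCl H φ t
  · rw [cfBig_cl H e₀ φ hr hcl, if_pos hcl,
      Set.ncard_union_eq (by simp) (Set.toFinite _) (Set.toFinite _),
      Set.ncard_image_of_injective _ Sum.inl_injective,
      Set.ncard_image_of_injective _ e₀.injective, Set.ncard_singleton]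
  · rw [cfBig_ncl H e₀ φ hr hcl, if_neg hcl, add_zero,
      Set.ncard_image_of_injective _ Sum.inl_injective,
      Set.ncard_image_of_injective _ e₀.injective]

lemma exists_pt (hr2 : 2 ≤ r) (i : Fin 2) : ∃ s : H.Slim, ptF H φ hpq s = i ∧ IsCl H φ s := by
  fin_cases i
  · refine ⟨φ.toEquiv.symm (inr (inr ⟨1, by omega⟩)), ?_,
      ⟨⟨1, by omega⟩, φ.toEquiv.apply_symm_apply _⟩⟩
    have h := idx_of_r H φ hpq (φ.toEquiv.apply_symm_apply (inr (inr ⟨1, by omega⟩)))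
    simp [ptF, h]
  · refine ⟨φ.toEquiv.symm (inr (inr ⟨0, by omega⟩)), ?_,
      ⟨⟨0, by omega⟩, φ.toEquiv.apply_symm_apply _⟩⟩
    have h := idx_of_r H φ hpq (φ.toEquiv.apply_symm_apply (inr (inr ⟨0, by omega⟩)))
    simp [ptF, h]

lemma decompBig (h1 : ∀ x : V, ¬ H.fat x → (H.fatNbrs x).ncard = 1) :
    (Hbig H e₀ φ hr).IsDecomposition (Wpart H e₀ φ hpq) := by
  constructor
  · -- nonempty
    intro i
    obtain ⟨s, hpt, -⟩ := exists_pt H φ hpq hr i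
    exact ⟨inl (e₀ s.1), (mem_Wpart H e₀ φ hpq i _).mpr (Or.inl ⟨s, rfl, hpt⟩)⟩
  · -- cover
    rintro (x0 | u)
    · by_cases hf : H.fat (e₀.symm x0)
      · obtain ⟨y, hy, hys⟩ := H.fat_slim _ hf
        exact ⟨ptF H φ hpq ⟨y, hys⟩,
          (mem_Wpart H e₀ φ hpq _ _).mpr (Or.inr ⟨hf, ⟨y, hys⟩, rfl, hy⟩)⟩
      · exact ⟨ptF H φ hpq ⟨e₀.symm x0, hf⟩,
          (mem_Wpart H e₀ φ hpq _ _).mpr (Or.inl ⟨⟨e₀.symm x0, hf⟩, by simp, rfl⟩)⟩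
    · obtain ⟨s, hpt, hcl⟩ := exists_pt H φ hpq hr 0
      exact ⟨0, (mem_Wpart H e₀ φ hpq _ _).mpr ⟨s, hpt, hcl⟩⟩
  · -- slim_disj
    rintro i j hij (x0 | u) hnf hxi hxj
    · rw [mem_Wpart] at hxi hxj
      have hnf' : ¬ H.fat (e₀.symm x0) := hnf
      rcases hxi with ⟨s, hs, hsi⟩ | ⟨hf, -⟩
      · rcases hxj with ⟨t, ht, htj⟩ | ⟨hf, -⟩
        · have hst : s = t := Subtype.ext (e₀.injective (hs.trans ht.symm))
          exact hij (by rw [← hsi, hst, htj])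
        · exact hnf' hf
      · exact hnf' hf
    · exact hnf trivial
  · -- fat_closed
    rintro i (x0 | u) (y0 | u') hx hnfx hfy hadj
    · rw [mem_Wpart] at hx ⊢
      rcases hx with ⟨s, hs, hsi⟩ | ⟨hf, -⟩
      · refine Or.inr ⟨hfy, s, hsi, ?_⟩
        have hadj' : H.adj (e₀.symm (e₀ s.1)) (e₀.symm y0) := by rw [hs]; exact hadj
        rw [Equiv.symm_apply_apply] at hadj'
        exact H.symm hadj'
      · exact absurd hf hnfx
    · rw [mem_Wpart] at hx ⊢
      rcases hx with ⟨s, hs, hsi⟩ | ⟨hf, -⟩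
      · refine ⟨s, hsi, ?_⟩
        have hadj' : SlimCl H φ (e₀.symm x0) := hadj
        rw [← hs, Equiv.symm_apply_apply, slimCl_coe] at hadj'
        exact hadj'
      · exact absurd hf hnfx
    · exact absurd trivial hnfx
    · exact absurd trivial hnfx
  · -- part_fat
    rintro i (y0 | u) hy hfy
    · have hfy' : H.fat (e₀.symm y0) := hfy
      rw [mem_Wpart] at hy
      rcases hy with ⟨s, hs, -⟩ | ⟨-, s, hsi, hadj⟩
      · exfalso
        apply s.2
        rw [← hs, Equiv.symm_apply_apply] at hfy'
        exact hfy'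
      · refine ⟨inl (e₀ s.1), (mem_Wpart H e₀ φ hpq _ _).mpr (Or.inl ⟨s, rfl, hsi⟩), ?_, ?_⟩
        · show ¬ H.fat (e₀.symm (e₀ s.1))
          simpa using s.2
        · show H.adj (e₀.symm y0) (e₀.symm (e₀ s.1))
          simpa using hadj
    · rw [mem_Wpart] at hy
      obtain ⟨s, hsi, hcl⟩ := hy
      refine ⟨inl (e₀ s.1), (mem_Wpart H e₀ φ hpq _ _).mpr (Or.inl ⟨s, rfl, hsi⟩), ?_, ?_⟩
      · show ¬ H.fat (e₀.symm (e₀ s.1))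
        simpa using s.2
      · show SlimCl H φ (e₀.symm (e₀ s.1))
        rw [Equiv.symm_apply_apply, slimCl_coe]
        exact hcl
  · -- cross
    rintro i j hij (x0 | u) (y0 | u') hx hy hnfx hnfy
    · rw [mem_Wpart] at hx hy
      rcases hx with ⟨s, hs, hsi⟩ | ⟨hf, -⟩
      swap
      · exact absurd hf hnfx
      rcases hy with ⟨t, ht, htj⟩ | ⟨hf, -⟩
      swap
      · exact absurd hf hnfy
      subst hs; subst ht
      have hptne : ptF H φ hpq s ≠ ptF H φ hpq t := by rw [hsi, htj]; exact hij
      have hidxne := idx_ne_of_pt_ne H φ hpq hptne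
      have hst : s ≠ t := fun h => hptne (by rw [h])
      by_cases hcl : IsCl H φ s ∧ IsCl H φ t
      · obtain ⟨⟨k, hk⟩, ⟨k', hk'⟩⟩ := hcl
        have kne : k ≠ k' := by
          intro h
          exact hidxne (by rw [idx_of_r H φ hpq hk, idx_of_r H φ hpq hk', h])
        obtain ⟨hadj, hemp⟩ := pos_of_cl H φ hk hk' kne
        rw [cfBig_ncard H e₀ φ hr, hemp, if_pos ⟨⟨k, hk⟩, ⟨k', hk'⟩⟩]
        constructor
        · simp
        · rw [Hbig_adj_ll, Equiv.symm_apply_apply, Equiv.symm_apply_apply]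
          simp [hadj]
      · obtain ⟨hp, hn⟩ := no_edge_of_idx_ne H φ hpq hidxne hcl
        rw [cfBig_ncard H e₀ φ hr, if_neg hcl, add_zero]
        refine ⟨cf_le_one H h1 s t.1, ?_⟩
        rw [Hbig_adj_ll, Equiv.symm_apply_apply, Equiv.symm_apply_apply]
        exact cf_card_iff H h1 hst hp hn
    · exact absurd trivial hnfy
    · exact absurd trivial hnfx
    · exact absurd trivial hnfx

lemma B_apply' {V' : Type*} (G : HoffmanGraph V') (x y : G.Slim) :
    G.B x y = (if G.adj x.1 y.1 then (1:ℝ) else 0) - ((G.commonFat x.1 y.1).ncard : ℝ) := rfl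

lemma B_diag (h1 : ∀ x : V, ¬ H.fat x → (H.fatNbrs x).ncard = 1) (s : H.Slim) :
    H.B s s = -1 := by
  rw [B_apply', if_neg (H.loopless s.1)]
  have hc : H.commonFat s.1 s.1 = H.fatNbrs s.1 := by
    ext f; simp only [HoffmanGraph.commonFat, HoffmanGraph.fatNbrs, Set.mem_setOf_eq]; tauto
  rw [hc, h1 s.1 s.2]
  norm_num

lemma B_pos {s t : H.Slim} (hp : H.special.pos s t) : H.B s t = 1 := by
  rw [B_apply', if_pos hp.1, hp.2]
  simp

lemma B_neg (h1 : ∀ x : V, ¬ H.fat x → (H.fatNbrs x).ncard = 1)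
    {s t : H.Slim} (hn : H.special.neg s t) : H.B s t = -1 := by
  rw [B_apply', if_neg hn.2.1]
  have h2 := (Set.ncard_pos (Set.toFinite _)).mpr hn.2.2
  have h3 := cf_le_one H h1 s t.1
  have hc : (H.commonFat s.1 t.1).ncard = 1 := by omega
  rw [hc]
  norm_num

lemma B_none (h1 : ∀ x : V, ¬ H.fat x → (H.fatNbrs x).ncard = 1)
    {s t : H.Slim} (hst : s ≠ t) (hp : ¬H.special.pos s t) (hn : ¬H.special.neg s t) :
    H.B s t = 0 := by
  by_cases hadj : H.adj s.1 t.1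
  · rw [B_apply', if_pos hadj, (cf_card_iff H h1 hst hp hn).mpr hadj]
    norm_num
  · rw [B_apply', if_neg hadj]
    have hc : H.commonFat s.1 t.1 = ∅ := by
      by_contra he
      exact hn ⟨hst, hadj, Set.nonempty_iff_ne_empty.mpr he⟩
    rw [hc]
    simp

/-- the indicator of clique slim vertices. -/
noncomputable def chiF (s : H.Slim) : ℝ := if IsCl H φ s then 1 else 0

lemma chi_cl {s : H.Slim} {k : Fin r} (hs : φ.toEquiv s = inr (inr k)) :
    chiF H φ s = 1 := if_pos ⟨k, hs⟩

lemma chi_p {s : H.Slim} {i : Fin p} (hs : φ.toEquiv s = inl i) :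
    chiF H φ s = 0 := by
  refine if_neg ?_
  rintro ⟨k, hk⟩
  rw [hs] at hk
  cases hk

lemma chi_q {s : H.Slim} {j : Fin q} (hs : φ.toEquiv s = inr (inl j)) :
    chiF H φ s = 0 := by
  refine if_neg ?_
  rintro ⟨k, hk⟩
  rw [hs] at hk
  simp at hk

def fPe (i : Fin p) : Fin r := ⟨i.1, by have := i.2; omega⟩
def fQe (j : Fin q) : Fin r := ⟨p + j.1, by have := j.2; omega⟩

/-- the matrix `B(Hbig) + stuff`, entries transported to `Q`'s vertex set. -/
noncomputable def NbM :
    (Fin p ⊕ Fin q ⊕ Fin r) → (Fin p ⊕ Fin q ⊕ Fin r) → ℝ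
  | inl i, inl i' => if i = i' then -1 else 0
  | inl _, inr (inl _) => 0
  | inl i, inr (inr k) => if k = fPe hpq i then 1 else 0
  | inr (inl _), inl _ => 0
  | inr (inl j), inr (inl j') => if j = j' then -1 else 0
  | inr (inl j), inr (inr k) => if k = fQe hpq j then -1 else 0
  | inr (inr k), inl i => if k = fPe hpq i then 1 else 0
  | inr (inr k), inr (inl j) => if k = fQe hpq j then -1 else 0
  | inr (inr k), inr (inr l) => if k = l then -2 else 0

lemma Bchi (h1 : ∀ x : V, ¬ H.fat x → (H.fatNbrs x).ncard = 1) (s t : H.Slim) :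
    H.B s t - chiF H φ s * chiF H φ t = NbM hpq (φ.toEquiv s) (φ.toEquiv t) := by
  have hinj : ∀ {a b : H.Slim}, φ.toEquiv a = φ.toEquiv b → a = b :=
    fun h => φ.toEquiv.injective h
  rcases hs : φ.toEquiv s with i | j | k <;> rcases ht : φ.toEquiv t with i' | j' | k'
  · -- p p
    rw [chi_p H φ hs, chi_p H φ ht, NbM]
    by_cases hii : i = i'
    · subst hii
      have hst : s = t := hinj (hs.trans ht.symm)
      subst hst
      rw [B_diag H h1, if_pos rfl]
      ring
    · have hst : s ≠ t := fun h => hii (by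
        have h2 := hs.symm.trans (h ▸ ht)
        simpa using h2)
      have hp : ¬H.special.pos s t := by rw [φ.pos_iff s t, hs, ht]; simp [Q]
      have hn : ¬H.special.neg s t := by rw [φ.neg_iff s t, hs, ht]; simp [Q]
      rw [B_none H h1 hst hp hn, if_neg (by simpa using hii)]
      ring
  · -- p q
    rw [chi_p H φ hs, chi_q H φ ht, NbM]
    have hst : s ≠ t := fun h => by rw [h, ht] at hs; cases hs
    have hp : ¬H.special.pos s t := by rw [φ.pos_iff s t, hs, ht]; simp [Q]
    have hn : ¬H.special.neg s t := by rw [φ.neg_iff s t, hs, ht]; simp [Q]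
    rw [B_none H h1 hst hp hn]
    ring
  · -- p r
    rw [chi_p H φ hs, chi_cl H φ ht, NbM]
    have hst : s ≠ t := fun h => by rw [h, ht] at hs; cases hs
    have hn : ¬H.special.neg s t := by rw [φ.neg_iff s t, hs, ht]; simp [Q]
    by_cases hk : k' = fPe hpq i
    · have hp : H.special.pos s t := by
        rw [φ.pos_iff s t, hs, ht]
        exact Or.inl ⟨i, k', rfl, rfl, by rw [hk]; rfl⟩
      rw [B_pos H hp, if_pos hk]
      ring
    · have hp : ¬H.special.pos s t := by
        rw [φ.pos_iff s t, hs, ht]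
        simp only [Q]
        push_neg
        refine ⟨?_, ?_, ?_⟩
        · rintro i0 k0 h hh
          simp only [inl.injEq] at h
          simp only [inr.injEq] at hh
          subst h; subst hh
          intro hv
          apply hk
          apply Fin.ext
          simpa [fPe, fQe] using hv
        · rintro i0 k0 h; cases h
        · rintro k0 l0 h; cases h
      rw [B_none H h1 hst hp hn, if_neg hk]
      ring
  · -- q p
    rw [chi_q H φ hs, chi_p H φ ht, NbM]
    have hst : s ≠ t := fun h => by rw [h, ht] at hs; cases hs
    have hp : ¬H.special.pos s t := by rw [φ.pos_iff s t, hs, ht]; simp [Q]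
    have hn : ¬H.special.neg s t := by rw [φ.neg_iff s t, hs, ht]; simp [Q]
    rw [B_none H h1 hst hp hn]
    ring
  · -- q q
    rw [chi_q H φ hs, chi_q H φ ht, NbM]
    by_cases hjj : j = j'
    · subst hjj
      have hst : s = t := hinj (hs.trans ht.symm)
      subst hst
      rw [B_diag H h1, if_pos rfl]
      ring
    · have hst : s ≠ t := fun h => hjj (by
        have := hs.symm.trans (h ▸ ht)
        simpa using this)
      have hp : ¬H.special.pos s t := by rw [φ.pos_iff s t, hs, ht]; simp [Q]
      have hn : ¬H.special.neg s t := by rw [φ.neg_iff s t, hs, ht]; simp [Q]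
      rw [B_none H h1 hst hp hn, if_neg (by simpa using hjj)]
      ring
  · -- q r
    rw [chi_q H φ hs, chi_cl H φ ht, NbM]
    have hst : s ≠ t := fun h => by rw [h, ht] at hs; simp at hs
    have hp : ¬H.special.pos s t := by rw [φ.pos_iff s t, hs, ht]; simp [Q]
    by_cases hk : k' = fQe hpq j
    · have hn : H.special.neg s t := by
        rw [φ.neg_iff s t, hs, ht]
        exact Or.inl ⟨j, k', rfl, rfl, by rw [hk]; rfl⟩
      rw [B_neg H h1 hn, if_pos hk]
      ring
    · have hn : ¬H.special.neg s t := by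
        rw [φ.neg_iff s t, hs, ht]
        simp only [Q]
        push_neg
        constructor
        · rintro j0 k0 h hh
          simp only [inr.injEq, inl.injEq] at h
          simp only [inr.injEq] at hh
          subst h; subst hh
          intro hv
          apply hk
          apply Fin.ext
          simpa [fPe, fQe] using hv
        · rintro j0 k0 h; cases h
      rw [B_none H h1 hst hp hn, if_neg hk]
      ring
  · -- r p
    rw [chi_cl H φ hs, chi_p H φ ht, NbM]
    have hst : s ≠ t := fun h => by rw [h, ht] at hs; cases hs
    have hn : ¬H.special.neg s t := by rw [φ.neg_iff s t, hs, ht]; simp [Q]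
    by_cases hk : k = fPe hpq i'
    · have hp : H.special.pos s t := by
        rw [φ.pos_iff s t, hs, ht]
        exact Or.inr (Or.inl ⟨i', k, rfl, rfl, by rw [hk]; rfl⟩)
      rw [B_pos H hp, if_pos hk]
      ring
    · have hp : ¬H.special.pos s t := by
        rw [φ.pos_iff s t, hs, ht]
        simp only [Q]
        push_neg
        refine ⟨?_, ?_, ?_⟩
        · rintro i0 k0 h; cases h
        · rintro i0 k0 h hh
          simp only [inl.injEq] at h
          simp only [inr.injEq] at hh
          subst h; subst hh
          intro hv
          apply hk
          apply Fin.ext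
          simpa [fPe, fQe] using hv
        · rintro k0 l0 h hh; cases hh
      rw [B_none H h1 hst hp hn, if_neg hk]
      ring
  · -- r q
    rw [chi_cl H φ hs, chi_q H φ ht, NbM]
    have hst : s ≠ t := fun h => by rw [h, ht] at hs; simp at hs
    have hp : ¬H.special.pos s t := by rw [φ.pos_iff s t, hs, ht]; simp [Q]
    by_cases hk : k = fQe hpq j'
    · have hn : H.special.neg s t := by
        rw [φ.neg_iff s t, hs, ht]
        exact Or.inr ⟨j', k, rfl, rfl, by rw [hk]; rfl⟩
      rw [B_neg H h1 hn, if_pos hk]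
      ring
    · have hn : ¬H.special.neg s t := by
        rw [φ.neg_iff s t, hs, ht]
        simp only [Q]
        push_neg
        constructor
        · rintro j0 k0 h; cases h
        · rintro j0 k0 h hh
          simp only [inr.injEq, inl.injEq] at h
          simp only [inr.injEq] at hh
          subst h; subst hh
          intro hv
          apply hk
          apply Fin.ext
          simpa [fPe, fQe] using hv
      rw [B_none H h1 hst hp hn, if_neg hk]
      ring
  · -- r r
    rw [chi_cl H φ hs, chi_cl H φ ht, NbM]
    by_cases hkk : k = k'
    · subst hkk
      have hst : s = t := hinj (hs.trans ht.symm)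
      subst hst
      rw [B_diag H h1, if_pos rfl]
      ring
    · have hp : H.special.pos s t := pos_of_cl H φ hs ht hkk
      rw [B_pos H hp, if_neg hkk]
      ring

lemma fPe_inj : Function.Injective (fPe (p := p) (q := q) hpq) :=
  fun a b h => Fin.ext (by simpa [fPe] using congrArg Fin.val h)

lemma fQe_inj : Function.Injective (fQe (p := p) (q := q) hpq) := by
  intro a b h
  have h2 := congrArg Fin.val h
  simp only [fQe] at h2
  exact Fin.ext (by omega)

lemma fPQ_disj : ∀ (i : Fin p) (j : Fin q), fPe (q := q) hpq i ≠ fQe hpq j := by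
  intro i j h
  have h2 := congrArg Fin.val h
  simp only [fPe, fQe] at h2
  have := i.2
  omega

lemma master (hpq : p + q ≤ r) (h1 : ∀ x : V, ¬ H.fat x → (H.fatNbrs x).ncard = 1) (w : H.Slim → ℝ) :
    0 ≤ (∑ x : H.Slim, ∑ y : H.Slim, w x * ((H.B x y - chiF H φ x * chiF H φ y) * w y))
      + (1 + (1+Real.sqrt 5)/2) * ∑ x : H.Slim, w x * w x := by
  classical
  set u : (Fin p ⊕ Fin q ⊕ Fin r) → ℝ := fun a => w (φ.toEquiv.symm a) with hu
  have hw : ∀ x : H.Slim, w x = u (φ.toEquiv x) := fun x => by simp [hu]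
  have split : ∀ (F : (Fin p ⊕ Fin q ⊕ Fin r) → ℝ),
      ∑ a, F a = ∑ i, F (inl i) + ∑ j, F (inr (inl j)) + ∑ k, F (inr (inr k)) := by
    intro F
    rw [Fintype.sum_sum_type, Fintype.sum_sum_type]
    ring
  have h2 : (∑ x : H.Slim, ∑ y : H.Slim, w x * ((H.B x y - chiF H φ x * chiF H φ y) * w y))
      = ∑ a, ∑ b, u a * (NbM hpq a b * u b) := by
    rw [← Equiv.sum_comp φ.toEquiv (fun a => ∑ b, u a * (NbM hpq a b * u b))]
    refine Finset.sum_congr rfl fun x _ => ?_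
    rw [← Equiv.sum_comp φ.toEquiv (fun b => u (φ.toEquiv x) * (NbM hpq (φ.toEquiv x) b * u b))]
    refine Finset.sum_congr rfl fun y _ => ?_
    rw [← hw, ← hw, Bchi H φ hpq h1]
  have h3 : ∑ x : H.Slim, w x * w x
      = ∑ i, u (inl i) * u (inl i) + ∑ j, u (inr (inl j)) * u (inr (inl j))
        + ∑ k, u (inr (inr k)) * u (inr (inr k)) := by
    rw [← split (fun a => u a * u a), ← Equiv.sum_comp φ.toEquiv (fun a => u a * u a)]
    exact Finset.sum_congr rfl fun x _ => by rw [← hw]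
  have I1 : ∀ i : Fin p, ∑ b, u (inl i) * (NbM hpq (inl i) b * u b)
      = -(u (inl i) * u (inl i)) + u (inl i) * u (inr (inr (fPe hpq i))) := by
    intro i
    rw [split]
    simp [NbM, mul_ite, ite_mul, mul_zero, zero_mul, mul_one, mul_neg,
      Finset.sum_ite_eq, Finset.sum_ite_eq']
  have I2 : ∀ j : Fin q, ∑ b, u (inr (inl j)) * (NbM hpq (inr (inl j)) b * u b)
      = -(u (inr (inl j)) * u (inr (inl j)))
        - u (inr (inl j)) * u (inr (inr (fQe hpq j))) := by
    intro j
    rw [split]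
    simp [NbM, mul_ite, ite_mul, mul_zero, zero_mul, mul_one, mul_neg,
      Finset.sum_ite_eq, Finset.sum_ite_eq']
    ring
  have I3 : ∀ k : Fin r, ∑ b, u (inr (inr k)) * (NbM hpq (inr (inr k)) b * u b)
      = (∑ i, if k = fPe hpq i then u (inr (inr k)) * u (inl i) else 0)
        + (∑ j, if k = fQe hpq j then -(u (inr (inr k)) * u (inr (inl j))) else 0)
        - 2*(u (inr (inr k)) * u (inr (inr k))) := by
    intro k
    rw [split]
    simp [NbM, mul_ite, ite_mul, mul_zero, zero_mul, mul_one, mul_neg,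
      Finset.sum_ite_eq, Finset.sum_ite_eq']
    ring
  have swap1 : ∑ k, ∑ i, (if k = fPe hpq i then u (inr (inr k)) * u (inl i) else 0)
      = ∑ i, u (inl i) * u (inr (inr (fPe hpq i))) := by
    rw [Finset.sum_comm]
    refine Finset.sum_congr rfl fun i _ => ?_
    rw [Finset.sum_ite_eq' Finset.univ (fPe hpq i)
      (fun k => u (inr (inr k)) * u (inl i))]
    simp [mul_comm]
  have swap2 : ∑ k, ∑ j, (if k = fQe hpq j then -(u (inr (inr k)) * u (inr (inl j))) else 0)
      = -∑ j, u (inr (inl j)) * u (inr (inr (fQe hpq j))) := by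
    rw [Finset.sum_comm, ← Finset.sum_neg_distrib]
    refine Finset.sum_congr rfl fun j _ => ?_
    rw [Finset.sum_ite_eq' Finset.univ (fQe hpq j)
      (fun k => -(u (inr (inr k)) * u (inr (inl j))))]
    simp [mul_comm]
  have hfinal : ∑ a, ∑ b, u a * (NbM hpq a b * u b)
      = -(∑ i, u (inl i) * u (inl i)) - (∑ j, u (inr (inl j)) * u (inr (inl j)))
        - 2*(∑ k, u (inr (inr k)) * u (inr (inr k)))
        + 2*(∑ i, u (inl i) * u (inr (inr (fPe hpq i))))
        - 2*(∑ j, u (inr (inl j)) * u (inr (inr (fQe hpq j)))) := by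
    rw [split (fun a => ∑ b, u a * (NbM hpq a b * u b)),
      Finset.sum_congr rfl (fun i _ => I1 i), Finset.sum_congr rfl (fun j _ => I2 j),
      Finset.sum_congr rfl (fun k _ => I3 k)]
    simp only [Finset.sum_add_distrib, Finset.sum_sub_distrib, Finset.sum_neg_distrib,
      ← Finset.mul_sum]
    rw [swap1, swap2]
    ring
  rw [h2, h3, hfinal]
  have hq := stmt15_quadQ (fPe hpq) (fQe hpq) (fPe_inj hpq) (fQe_inj hpq) (fPQ_disj hpq)
    (fun i => u (inl i)) (fun j => u (inr (inl j))) (fun k => u (inr (inr k)))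
  have e1 : ∑ i, (u (inl i))^2 = ∑ i, u (inl i) * u (inl i) :=
    Finset.sum_congr rfl fun i _ => sq (u (inl i)) ▸ rfl
  have e2 : ∑ j, (u (inr (inl j)))^2 = ∑ j, u (inr (inl j)) * u (inr (inl j)) :=
    Finset.sum_congr rfl fun j _ => by rw [pow_two]
  have e3 : ∑ k, (u (inr (inr k)))^2 = ∑ k, u (inr (inr k)) * u (inr (inr k)) :=
    Finset.sum_congr rfl fun k _ => by rw [pow_two]
  rw [e1, e2, e3] at hq
  linarith [hq]

lemma lamMin_H_ge (φ : EdgeSignedIso H.special (Q p q r)) (hpq : p + q ≤ r) (h1 : ∀ x : V, ¬ H.fat x → (H.fatNbrs x).ncard = 1) :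
    H.lamMin ≥ -1 - (1+Real.sqrt 5)/2 := by
  have hα : -1 - (1+Real.sqrt 5)/2 ≤ 0 := by nlinarith [Real.sqrt_nonneg 5]
  have key : ∀ v : H.Slim → ℝ,
      (-1 - (1+Real.sqrt 5)/2) * (v ⬝ᵥ v) ≤ v ⬝ᵥ H.B.mulVec v := by
    intro v
    have hm := master H φ hpq h1 v
    have hdot : v ⬝ᵥ H.B.mulVec v = ∑ x, ∑ y, v x * (H.B x y * v y) := by
      simp [dotProduct, Matrix.mulVec, Finset.mul_sum]
    have hvv : v ⬝ᵥ v = ∑ x, v x * v x := rfl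
    have hs : ∑ x, ∑ y, v x * (H.B x y * v y)
        = (∑ x, ∑ y, v x * ((H.B x y - chiF H φ x * chiF H φ y) * v y))
          + (∑ x, chiF H φ x * v x) * (∑ y, chiF H φ y * v y) := by
      rw [Finset.sum_mul_sum, ← Finset.sum_add_distrib]
      refine Finset.sum_congr rfl fun x _ => ?_
      rw [← Finset.sum_add_distrib]
      refine Finset.sum_congr rfl fun y _ => ?_
      ring
    have hsqr : 0 ≤ (∑ x, chiF H φ x * v x) * (∑ y, chiF H φ y * v y) :=
      mul_self_nonneg _
    rw [hdot, hs, hvv]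
    nlinarith [hm, hsqr]
  have hres := stmt15_minEig_ge H.B _ hα key
  unfold HoffmanGraph.lamMin
  convert hres.ge using 2

def psiF (i : Fin 2) (hW : ∀ y ∈ Wpart H e₀ φ hpq i, (Hbig H e₀ φ hr).fat y →
      ∃ x ∈ Wpart H e₀ φ hpq i, ¬ (Hbig H e₀ φ hr).fat x ∧ (Hbig H e₀ φ hr).adj y x) :
    ((Hbig H e₀ φ hr).induce (Wpart H e₀ φ hpq i) hW).Slim → H.Slim
  | ⟨⟨inl x, _⟩, hs⟩ => ⟨e₀.symm x, hs⟩
  | ⟨⟨inr _, _⟩, hs⟩ => absurd trivial hs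

variable {i : Fin 2}
variable (hW : ∀ y ∈ Wpart H e₀ φ hpq i, (Hbig H e₀ φ hr).fat y →
      ∃ x ∈ Wpart H e₀ φ hpq i, ¬ (Hbig H e₀ φ hr).fat x ∧ (Hbig H e₀ φ hr).adj y x)

lemma psiF_val (z : ((Hbig H e₀ φ hr).induce (Wpart H e₀ φ hpq i) hW).Slim) :
    inl (e₀ (psiF H e₀ φ hr hpq i hW z).1) = z.1.1 := by
  rcases z with ⟨⟨x | u, hx⟩, hs⟩
  · simp [psiF]
  · exact absurd trivial hs

lemma psiF_inj : Function.Injective (psiF H e₀ φ hr hpq i hW) := by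
  intro z1 z2 h
  have h2 : z1.1.1 = z2.1.1 := by
    rw [← psiF_val H e₀ φ hr hpq hW z1, ← psiF_val H e₀ φ hr hpq hW z2, h]
  exact Subtype.ext (Subtype.ext h2)

lemma pt_of_memW (s : H.Slim) (hmem : inl (e₀ s.1) ∈ Wpart H e₀ φ hpq i) :
    ptF H φ hpq s = i := by
  rw [mem_Wpart] at hmem
  rcases hmem with ⟨t, ht, hti⟩ | ⟨hf, -⟩
  · have hts : t = s := Subtype.ext (e₀.injective ht)
    rw [hts] at hti
    exact hti
  · exfalso
    apply s.2
    simpa using hf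

lemma part_entry (h1 : ∀ x : V, ¬ H.fat x → (H.fatNbrs x).ncard = 1)
    (z1 z2 : ((Hbig H e₀ φ hr).induce (Wpart H e₀ φ hpq i) hW).Slim) :
    ((Hbig H e₀ φ hr).induce (Wpart H e₀ φ hpq i) hW).B z1 z2
      = H.B (psiF H e₀ φ hr hpq i hW z1) (psiF H e₀ φ hr hpq i hW z2)
        - chiF H φ (psiF H e₀ φ hr hpq i hW z1) * chiF H φ (psiF H e₀ φ hr hpq i hW z2) := by
  set s := psiF H e₀ φ hr hpq i hW z1 with hsdef
  set t := psiF H e₀ φ hr hpq i hW z2 with htdef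
  have hz1 : z1.1.1 = inl (e₀ s.1) := (psiF_val H e₀ φ hr hpq hW z1).symm
  have hz2 : z2.1.1 = inl (e₀ t.1) := (psiF_val H e₀ φ hr hpq hW z2).symm
  have hadj : ((Hbig H e₀ φ hr).induce (Wpart H e₀ φ hpq i) hW).adj z1.1 z2.1
      ↔ H.adj s.1 t.1 := by
    show (Hbig H e₀ φ hr).adj z1.1.1 z2.1.1 ↔ _
    rw [hz1, hz2, Hbig_adj_ll, Equiv.symm_apply_apply, Equiv.symm_apply_apply]
  have hpts : ptF H φ hpq s = i := pt_of_memW H e₀ φ hpq s (by rw [← hz1]; exact z1.1.2)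
  have himg : Subtype.val '' (((Hbig H e₀ φ hr).induce (Wpart H e₀ φ hpq i) hW).commonFat z1.1 z2.1)
      = (Hbig H e₀ φ hr).commonFat z1.1.1 z2.1.1 := by
    ext f
    constructor
    · rintro ⟨g, hg, rfl⟩
      exact ⟨hg.1, hg.2.1, hg.2.2⟩
    · intro hf
      obtain ⟨hfat, hfa, hfb⟩ := hf
      have hfW : f ∈ Wpart H e₀ φ hpq i := by
        rcases f with g | u
        · rw [mem_Wpart]
          refine Or.inr ⟨hfat, s, hpts, ?_⟩
          rw [hz1] at hfa
          have hfa' : H.adj (e₀.symm (e₀ s.1)) (e₀.symm g) := hfa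
          rw [Equiv.symm_apply_apply] at hfa'
          exact H.symm hfa'
        · rw [mem_Wpart]
          refine ⟨s, hpts, ?_⟩
          rw [hz1] at hfa
          have hfa' : SlimCl H φ (e₀.symm (e₀ s.1)) := hfa
          rw [Equiv.symm_apply_apply, slimCl_coe] at hfa'
          exact hfa'
      exact ⟨⟨f, hfW⟩, ⟨hfat, hfa, hfb⟩, rfl⟩
  have hcf : (((Hbig H e₀ φ hr).induce (Wpart H e₀ φ hpq i) hW).commonFat z1.1 z2.1).ncard
      = ((Hbig H e₀ φ hr).commonFat z1.1.1 z2.1.1).ncard := by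
    rw [← himg, Set.ncard_image_of_injective _ Subtype.val_injective]
  rw [B_apply', B_apply', hcf, hz1, hz2, cfBig_ncard H e₀ φ hr s t]
  simp only [hadj]
  by_cases hcl : IsCl H φ s ∧ IsCl H φ t
  · rw [if_pos hcl]
    unfold chiF
    rw [if_pos hcl.1, if_pos hcl.2]
    push_cast
    ring
  · rw [if_neg hcl]
    have hchi : chiF H φ s * chiF H φ t = 0 := by
      unfold chiF
      rcases not_and_or.mp hcl with h | h
      · rw [if_neg h, zero_mul]
      · rw [if_neg h, mul_zero]
    rw [hchi]
    push_cast
    ring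

lemma lamMin_part_ge (h1 : ∀ x : V, ¬ H.fat x → (H.fatNbrs x).ncard = 1) :
    ((Hbig H e₀ φ hr).induce (Wpart H e₀ φ hpq i) hW).lamMin
      ≥ -1 - (1+Real.sqrt 5)/2 := by
  classical
  have hα : -1 - (1+Real.sqrt 5)/2 ≤ 0 := by nlinarith [Real.sqrt_nonneg 5]
  set G := (Hbig H e₀ φ hr).induce (Wpart H e₀ φ hpq i) hW with hG
  set ψ := psiF H e₀ φ hr hpq i hW with hψ
  have hψinj : Function.Injective ψ := psiF_inj H e₀ φ hr hpq hW
  have hBG : ∀ z1 z2, G.B z1 z2 = H.B (ψ z1) (ψ z2)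
      - chiF H φ (ψ z1) * chiF H φ (ψ z2) :=
    fun z1 z2 => part_entry H e₀ φ hr hpq hW h1 z1 z2
  have key : ∀ v : G.Slim → ℝ,
      (-1 - (1+Real.sqrt 5)/2) * (v ⬝ᵥ v) ≤ v ⬝ᵥ G.B.mulVec v := by
    intro v
    set w : H.Slim → ℝ := fun s0 => ∑ z, if ψ z = s0 then v z else 0 with hwdef
    have hwz : ∀ z, w (ψ z) = v z := by
      intro z
      rw [hwdef]
      simp only
      rw [Finset.sum_eq_single_of_mem z (Finset.mem_univ z)
        (fun z' _ hne => if_neg (fun h => hne (hψinj h)))]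
      exact if_pos rfl
    have transfer : ∀ F : H.Slim → ℝ, ∑ s0, w s0 * F s0 = ∑ z, v z * F (ψ z) := by
      intro F
      calc ∑ s0, w s0 * F s0 = ∑ s0, ∑ z, (if ψ z = s0 then v z * F s0 else 0) := by
            refine Finset.sum_congr rfl fun s0 _ => ?_
            rw [hwdef]
            simp only
            rw [Finset.sum_mul]
            refine Finset.sum_congr rfl fun z _ => ?_
            split_ifs <;> simp
        _ = ∑ z, ∑ s0, (if ψ z = s0 then v z * F s0 else 0) := Finset.sum_comm
        _ = ∑ z, v z * F (ψ z) := by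
            refine Finset.sum_congr rfl fun z _ => ?_
            rw [Finset.sum_ite_eq Finset.univ (ψ z) (fun s0 => v z * F s0)]
            simp
    have hsq : ∑ s0, w s0 * w s0 = ∑ z, v z * v z := by
      rw [transfer w]
      exact Finset.sum_congr rfl fun z _ => by rw [hwz]
    have hdot : v ⬝ᵥ G.B.mulVec v = ∑ z1, ∑ z2, v z1 * (G.B z1 z2 * v z2) := by
      simp [dotProduct, Matrix.mulVec, Finset.mul_sum]
    have hqf : ∑ x, ∑ y, w x * ((H.B x y - chiF H φ x * chiF H φ y) * w y)
        = ∑ z1, ∑ z2, v z1 * (G.B z1 z2 * v z2) := by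
      calc ∑ x, ∑ y, w x * ((H.B x y - chiF H φ x * chiF H φ y) * w y)
          = ∑ x, w x * (∑ y, w y * (H.B x y - chiF H φ x * chiF H φ y)) := by
            refine Finset.sum_congr rfl fun x _ => ?_
            rw [Finset.mul_sum]
            exact Finset.sum_congr rfl fun y _ => by ring
        _ = ∑ z1, v z1 * (∑ y, w y * (H.B (ψ z1) y - chiF H φ (ψ z1) * chiF H φ y)) :=
            transfer _
        _ = ∑ z1, v z1 * (∑ z2, v z2 * (H.B (ψ z1) (ψ z2)
              - chiF H φ (ψ z1) * chiF H φ (ψ z2))) := by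
            refine Finset.sum_congr rfl fun z1 _ => ?_
            rw [transfer (fun y => H.B (ψ z1) y - chiF H φ (ψ z1) * chiF H φ y)]
        _ = ∑ z1, ∑ z2, v z1 * (G.B z1 z2 * v z2) := by
            refine Finset.sum_congr rfl fun z1 _ => ?_
            rw [Finset.mul_sum]
            refine Finset.sum_congr rfl fun z2 _ => ?_
            rw [hBG z1 z2]
            ring
    have hm := master H φ hpq h1 w
    have hvv : v ⬝ᵥ v = ∑ z, v z * v z := rfl
    rw [hdot, hvv, ← hqf]
    nlinarith [hm, hsq.le, hsq.ge]
  have hres := stmt15_minEig_ge G.B _ hα key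
  unfold HoffmanGraph.lamMin
  convert hres.ge using 2

end Statement15Aux

/-- Lemma 4.7. If every slim vertex of `H` has exactly one fat
neighbor and the special graph `S(H)` is isomorphic to `Q_{p,q,r}` with `p + q ≤ r`
and `r ≥ 2`, then `H` is `(−1−τ)`-reducible. -/
theorem statement15 {V : Type*} [Fintype V] (H : HoffmanGraph V)
    (h1 : ∀ x : V, ¬ H.fat x → (H.fatNbrs x).ncard = 1)
    (p q r : ℕ) (hpq : p + q ≤ r) (hr : 2 ≤ r)
    (hiso : Nonempty (EdgeSignedIso H.special (Q p q r))) :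
    H.AlphaReducible (-1 - (1 + Real.sqrt 5) / 2) := by
  classical
  obtain ⟨φ⟩ := hiso
  set e₀ := Fintype.equivFin V with he₀
  constructor
  · exact lamMin_H_ge H φ hpq h1
  refine ⟨Fin (Fintype.card V) ⊕ Unit, inferInstance, Hbig H e₀ φ hr,
    ⟨fun v => Sum.inl (e₀ v), fun a b h => e₀.injective (by simpa using h), ?_, ?_⟩,
    Wpart H e₀ φ hpq, decompBig H e₀ φ hr hpq h1, ?_, ?_⟩
  · intro x y
    rw [Hbig_adj_ll]
    simp
  · intro x
    show H.fat x ↔ (Hbig H e₀ φ hr).fat (Sum.inl (e₀ x))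
    rw [Hbig_fat_inl]
    simp
  · intro i
    exact lamMin_part_ge H e₀ φ hr hpq ((decompBig H e₀ φ hr hpq h1).part_fat i) h1
  · intro i
    obtain ⟨s, hpt, -⟩ := exists_pt H φ hpq hr i
    exact ⟨s.1, s.2, (mem_Wpart H e₀ φ hpq i _).mpr (Or.inl ⟨s, rfl, hpt⟩)⟩
end
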